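/- arXiv:2502.06526 — 5 statements merged into one kernel-verified Lean document; each statement's English description precedes it below -/
import Mathlib

section
/- For all density matrices ρ and σ on the same finite-dimensional complex Hilbert space, D₂(ρ‖σ) ≥ log(1 + ‖ρ − σ‖₁²). -/
open scoped Matrix Kronecker BigOperators ENNReal ComplexOrder Classical

noncomputable section

variable {d : Type*} [Fintype d] [DecidableEq d]

/-- Apply a real function to the eigenvalues of a Hermitian matrix (spectral
functional calculus). -/
def herFun {A : Matrix d d ℂ} (hA : A.IsHermitian) (f : ℝ → ℝ) : Matrix d d ℂ :=
  (hA.eigenvectorUnitary : Matrix d d ℂ) *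
    Matrix.diagonal (fun i => (f (hA.eigenvalues i) : ℂ)) *
    (hA.eigenvectorUnitary : Matrix d d ℂ)ᴴ

/-- Functional calculus, extended by the junk value `0` to non-Hermitian matrices. -/
def matFun (A : Matrix d d ℂ) (f : ℝ → ℝ) : Matrix d d ℂ :=
  if h : A.IsHermitian then herFun h f else 0

/-- Real power of a Hermitian matrix, taken on its support (Moore–Penrose
convention: zero eigenvalues are sent to zero; negative powers are pseudo-inverses). -/
def matPow (A : Matrix d d ℂ) (r : ℝ) : Matrix d d ℂ :=
  matFun A (fun x => if x = 0 then 0 else Real.rpow x r)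

/-- Logarithm of a Hermitian matrix on its support. -/
def matLog (A : Matrix d d ℂ) : Matrix d d ℂ := matFun A Real.log

/-- A density matrix: positive semidefinite with unit trace. -/
def IsDensity (A : Matrix d d ℂ) : Prop := A.PosSemidef ∧ A.trace = 1

/-- `suppLE ρ σ` : the support of `ρ` is contained in the support of `σ`
(for Hermitian matrices this is equivalent to `ker σ ≤ ker ρ`). -/
def suppLE (ρ σ : Matrix d d ℂ) : Prop :=
  LinearMap.ker σ.mulVecLin ≤ LinearMap.ker ρ.mulVecLin

/-- Trace (nuclear) norm of a matrix: `Tr √(AᴴA)`. -/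
def traceNorm (A : Matrix d d ℂ) : ℝ := (Matrix.trace (matPow (Aᴴ * A) (1/2))).re

/-- The real-valued collision quantity `Tr[ρ σ^{-1/2} ρ σ^{-1/2}]`. -/
def Q2R (ρ σ : Matrix d d ℂ) : ℝ :=
  (Matrix.trace (ρ * matPow σ (-(1/2)) * ρ * matPow σ (-(1/2)))).re

/-- `Q₂(ρ‖σ) = Tr[ρ σ^{-1/2} ρ σ^{-1/2}]`, equal to `+∞` unless `supp ρ ⊆ supp σ`. -/
def Q2 (ρ σ : Matrix d d ℂ) : ℝ≥0∞ :=
  if suppLE ρ σ then ENNReal.ofReal (Q2R ρ σ) else ∞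

/-- Collision relative entropy `D₂(ρ‖σ) = log Q₂(ρ‖σ)`. -/
def D2 (ρ σ : Matrix d d ℂ) : EReal := ENNReal.log (Q2 ρ σ)

/-- Fidelity `F(ρ,σ) = ‖√ρ √σ‖₁`. -/
def fidelity (ρ σ : Matrix d d ℂ) : ℝ := traceNorm (matPow ρ (1/2) * matPow σ (1/2))

/-- Purified distance `P(ρ,σ) = √(1 - F(ρ,σ)²)`. -/
def purifiedDist (ρ σ : Matrix d d ℂ) : ℝ := Real.sqrt (1 - fidelity ρ σ ^ 2)

-- ## auxiliary lemmas

lemma uStar (V : Matrix.unitaryGroup d ℂ) : (V : Matrix d d ℂ)ᴴ * (V : Matrix d d ℂ) = 1 := by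
  simpa [Matrix.star_eq_conjTranspose] using Matrix.UnitaryGroup.star_mul_self V

lemma uSelf (V : Matrix.unitaryGroup d ℂ) : (V : Matrix d d ℂ) * (V : Matrix d d ℂ)ᴴ = 1 := by
  simpa [Matrix.star_eq_conjTranspose] using Matrix.mem_unitaryGroup_iff.mp V.2

lemma herm_conj (V : Matrix.unitaryGroup d ℂ) (c : d → ℝ) :
    ((V : Matrix d d ℂ) * Matrix.diagonal (fun i => (c i : ℂ)) * (V : Matrix d d ℂ)ᴴ).IsHermitian := by
  unfold Matrix.IsHermitian
  simp [Matrix.conjTranspose_mul, Matrix.diagonal_conjTranspose, Matrix.mul_assoc]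
  congr 1
  ext i
  simp [Pi.star_apply, Complex.star_def, Complex.conj_ofReal]

lemma spectral (A : Matrix d d ℂ) (hA : A.IsHermitian) :
    A = (hA.eigenvectorUnitary : Matrix d d ℂ) *
      Matrix.diagonal (fun i => ((hA.eigenvalues i : ℝ) : ℂ)) *
      (hA.eigenvectorUnitary : Matrix d d ℂ)ᴴ := by
  have := hA.spectral_theorem
  simp [Matrix.star_eq_conjTranspose] at this; exact this

lemma diag_conj_transfer (V W : Matrix.unitaryGroup d ℂ) (c c' : d → ℝ) (f : ℝ → ℝ)
    (h : (V : Matrix d d ℂ) * Matrix.diagonal (fun i => (c i : ℂ)) * (V : Matrix d d ℂ)ᴴ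
       = (W : Matrix d d ℂ) * Matrix.diagonal (fun i => (c' i : ℂ)) * (W : Matrix d d ℂ)ᴴ) :
    (V : Matrix d d ℂ) * Matrix.diagonal (fun i => (f (c i) : ℂ)) * (V : Matrix d d ℂ)ᴴ
       = (W : Matrix d d ℂ) * Matrix.diagonal (fun i => (f (c' i) : ℂ)) * (W : Matrix d d ℂ)ᴴ := by
  have hV1 := uStar V; have hV2 := uSelf V; have hW1 := uStar W; have hW2 := uSelf W
  have key : Matrix.diagonal (fun i => (c i : ℂ)) * (V : Matrix d d ℂ)ᴴ * (W : Matrix d d ℂ)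
      = (V : Matrix d d ℂ)ᴴ * (W : Matrix d d ℂ) * Matrix.diagonal (fun i => (c' i : ℂ)) := by
    have h2 := congrArg (fun X => (V : Matrix d d ℂ)ᴴ * X * (W : Matrix d d ℂ)) h
    simp only [Matrix.mul_assoc, hV1, Matrix.one_mul, ← Matrix.mul_assoc] at h2
    rw [h2, Matrix.mul_assoc _ (W : Matrix d d ℂ)ᴴ (W : Matrix d d ℂ), hW1, Matrix.mul_one]
  have key2 : Matrix.diagonal (fun i => (f (c i) : ℂ)) * ((V : Matrix d d ℂ)ᴴ * (W : Matrix d d ℂ))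
      = ((V : Matrix d d ℂ)ᴴ * (W : Matrix d d ℂ)) * Matrix.diagonal (fun i => (f (c' i) : ℂ)) := by
    rw [Matrix.mul_assoc] at key
    ext i j
    have hij := congrFun (congrFun key i) j
    rw [Matrix.diagonal_mul, Matrix.mul_diagonal] at hij
    rw [Matrix.diagonal_mul, Matrix.mul_diagonal]
    by_cases hz : ((V : Matrix d d ℂ)ᴴ * (W : Matrix d d ℂ)) i j = 0
    · simp [hz]
    · have : (c i : ℂ) = (c' j : ℂ) := by
        rw [mul_comm (((V : Matrix d d ℂ)ᴴ * (W : Matrix d d ℂ)) i j)] at hij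
        exact mul_right_cancel₀ hz hij
      have : c i = c' j := by exact_mod_cast this
      rw [this, mul_comm]
  have h3 := congrArg (fun X => (V : Matrix d d ℂ) * X * (W : Matrix d d ℂ)ᴴ) key2
  simp only [Matrix.mul_assoc, hW2, Matrix.mul_one] at h3
  simp only [← Matrix.mul_assoc, hV2, Matrix.one_mul] at h3
  simpa [Matrix.mul_assoc] using h3

lemma matFun_conj (V : Matrix.unitaryGroup d ℂ) (c : d → ℝ) (f : ℝ → ℝ) :
    matFun ((V : Matrix d d ℂ) * Matrix.diagonal (fun i => (c i : ℂ)) * (V : Matrix d d ℂ)ᴴ) f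
      = (V : Matrix d d ℂ) * Matrix.diagonal (fun i => (f (c i) : ℂ)) * (V : Matrix d d ℂ)ᴴ := by
  have hA := herm_conj V c
  rw [matFun, dif_pos hA, herFun]
  exact (diag_conj_transfer hA.eigenvectorUnitary V hA.eigenvalues c f
    (spectral _ hA ▸ rfl : _)).symm ▸ rfl

/-- cancellation: (A * Vᴴ) * (V * B) = A * B -/
lemma conj_cancel (V : Matrix.unitaryGroup d ℂ) (A B : Matrix d d ℂ) :
    (A * (V : Matrix d d ℂ)ᴴ) * ((V : Matrix d d ℂ) * B) = A * B := by
  rw [Matrix.mul_assoc, ← Matrix.mul_assoc (V : Matrix d d ℂ)ᴴ, uStar, Matrix.one_mul]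

lemma conj_mul_conj (V : Matrix.unitaryGroup d ℂ) (A B : Matrix d d ℂ) :
    ((V : Matrix d d ℂ) * A * (V : Matrix d d ℂ)ᴴ) * ((V : Matrix d d ℂ) * B * (V : Matrix d d ℂ)ᴴ)
      = (V : Matrix d d ℂ) * (A * B) * (V : Matrix d d ℂ)ᴴ := by
  rw [Matrix.mul_assoc (V : Matrix d d ℂ) B, conj_cancel V ((V : Matrix d d ℂ) * A) (B * (V : Matrix d d ℂ)ᴴ),
    Matrix.mul_assoc, Matrix.mul_assoc, Matrix.mul_assoc]

lemma trace_conj (V : Matrix.unitaryGroup d ℂ) (A : Matrix d d ℂ) :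
    ((V : Matrix d d ℂ) * A * (V : Matrix d d ℂ)ᴴ).trace = A.trace := by
  rw [Matrix.trace_mul_cycle]
  rw [uStar, Matrix.one_mul]

lemma conj_apply_diag (V : Matrix.unitaryGroup d ℂ) (cc : d → ℂ) (i j : d) :
    ((V : Matrix d d ℂ) * Matrix.diagonal cc * (V : Matrix d d ℂ)ᴴ) i j
      = ∑ k, (V : Matrix d d ℂ) i k * cc k * star ((V : Matrix d d ℂ) j k) := by
  rw [Matrix.mul_apply]
  simp only [Matrix.mul_diagonal, Matrix.conjTranspose_apply]

lemma trace_conj_diag (V : Matrix.unitaryGroup d ℂ) (cc : d → ℂ) :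
    ((V : Matrix d d ℂ) * Matrix.diagonal cc * (V : Matrix d d ℂ)ᴴ).trace = ∑ i, cc i := by
  rw [trace_conj, Matrix.trace_diagonal]

set_option maxHeartbeats 1000000 in
/-- `D₂(ρ‖σ) ≥ log(1 + ‖ρ − σ‖₁²)` for density matrices `ρ, σ`. -/
theorem D2_ge_log_one_add_traceDist_sq
    (ρ σ : Matrix d d ℂ) (hρ : IsDensity ρ) (hσ : IsDensity σ) :
    ((Real.log (1 + traceNorm (ρ - σ) ^ 2) : ℝ) : EReal) ≤ D2 ρ σ := by
  by_cases hsupp : suppLE ρ σ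
  swap
  · rw [D2, Q2, if_neg hsupp, ENNReal.log_top]; exact le_top
  obtain ⟨hρP, hρT⟩ := hρ
  obtain ⟨hσP, hσT⟩ := hσ
  have hσH : σ.IsHermitian := hσP.1
  set U : Matrix.unitaryGroup d ℂ := hσH.eigenvectorUnitary with hUdef
  set e : d → ℝ := hσH.eigenvalues with hedef
  have he0 : ∀ i, 0 ≤ e i := fun i => hσP.eigenvalues_nonneg i
  have hspec : σ = (U : Matrix d d ℂ) * Matrix.diagonal (fun i => (e i : ℂ)) * (U : Matrix d d ℂ)ᴴ :=
    spectral σ hσH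
  set g : d → ℝ := fun i => if e i = 0 then 0 else Real.rpow (e i) (-(1/2)) with hgdef
  have hg0 : ∀ i, 0 ≤ g i := by
    intro i; rw [hgdef]; dsimp only
    split
    · exact le_refl 0
    · exact (Real.rpow_pos_of_pos (lt_of_le_of_ne (he0 i) (Ne.symm ‹_›)) _).le
  have hgsq : ∀ i, e i ≠ 0 → g i = (Real.sqrt (e i))⁻¹ := by
    intro i hi
    have hpos : 0 < e i := lt_of_le_of_ne (he0 i) (Ne.symm hi)
    rw [hgdef]; dsimp only; rw [if_neg hi]
    rw [show Real.rpow (e i) (-(1/2)) = (e i) ^ ((-(1/2)) : ℝ) from rfl,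
      Real.rpow_neg (he0 i), Real.sqrt_eq_rpow]
  have hmp : matPow σ (-(1/2))
      = (U : Matrix d d ℂ) * Matrix.diagonal (fun i => (g i : ℂ)) * (U : Matrix d d ℂ)ᴴ := by
    rw [matPow]
    conv_lhs => rw [hspec]
    exact matFun_conj U e _
  set ρ' : Matrix d d ℂ := (U : Matrix d d ℂ)ᴴ * ρ * (U : Matrix d d ℂ) with hρ'def
  have hρeq : ρ = (U : Matrix d d ℂ) * ρ' * (U : Matrix d d ℂ)ᴴ := by
    rw [hρ'def]
    simp only [← Matrix.mul_assoc]
    rw [uSelf, Matrix.one_mul, Matrix.mul_assoc, uSelf, Matrix.mul_one]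
  have hρ'H : ρ'.IsHermitian := by
    rw [hρ'def]
    unfold Matrix.IsHermitian
    simp [Matrix.conjTranspose_mul, Matrix.mul_assoc, hρP.1.eq]
  have hρ'P : ρ'.PosSemidef := hρP.conjTranspose_mul_mul_same (U : Matrix d d ℂ)
  set t : d → ℝ := fun i => (ρ' i i).re with htdef
  have hdiag : ∀ i, ρ' i i = (t i : ℂ) ∧ 0 ≤ t i := by
    intro i
    have h0 : (0:ℂ) ≤ ρ' i i := by
      exact hρ'P.diag_nonneg
    rw [Complex.le_def] at h0
    refine ⟨?_, by simpa using h0.1⟩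
    apply Complex.ext
    · simp [htdef]
    · simp [htdef, ← h0.2]
  have hcol : ∀ i, e i = 0 → ∀ j, ρ' j i = 0 := by
    intro i hei j
    have hv : σ *ᵥ ⇑(hσH.eigenvectorBasis i) = 0 := by
      rw [hσH.mulVec_eigenvectorBasis]
      rw [show hσH.eigenvalues i = e i from rfl, hei, zero_smul]
    have hρv : ρ *ᵥ ⇑(hσH.eigenvectorBasis i) = 0 :=
      hsupp (by simpa [LinearMap.mem_ker, Matrix.mulVecLin_apply] using hv)
    have hentry : ρ' j i = ∑ k, star ((U : Matrix d d ℂ) k j) * (ρ *ᵥ ⇑(hσH.eigenvectorBasis i)) k := by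
      rw [hρ'def, Matrix.mul_apply]
      simp only [Matrix.mul_apply, Matrix.conjTranspose_apply, Matrix.mulVec, dotProduct,
        Finset.sum_mul, Finset.mul_sum]
      rw [Finset.sum_comm]
      refine Finset.sum_congr rfl (fun k _ => Finset.sum_congr rfl (fun m _ => ?_))
      have hUm : (U : Matrix d d ℂ) m i = (WithLp.equiv 2 (d → ℂ)) (hσH.eigenvectorBasis i) m := rfl
      rw [hUm, mul_assoc]; rfl
    rw [hentry, hρv]
    simp
  have hzero : ∀ i j, e i = 0 ∨ e j = 0 → ρ' i j = 0 := by
    intro i j hij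
    rcases hij with h | h
    · have := hcol i h j
      have h2 : ρ' i j = star (ρ' j i) := by
        rw [← Matrix.conjTranspose_apply, hρ'H.eq]
      rw [h2, this, star_zero]
    · exact hcol j h i
  -- traces
  have htσ : ∑ i, e i = 1 := by
    have h1 : σ.trace = ∑ i, (e i : ℂ) := by
      conv_lhs => rw [hspec]
      exact trace_conj_diag U _
    have := h1 ▸ hσT
    have h2 : ((∑ i, e i : ℝ) : ℂ) = 1 := by push_cast [← this]; rfl
    exact_mod_cast h2
  have htρ : ∑ i, t i = 1 := by
    have h1 : ρ'.trace = ρ.trace := by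
      conv_rhs => rw [hρeq]
      exact (trace_conj U ρ').symm
    have h2 : ρ'.trace = 1 := h1.trans hρT
    have h3 : (ρ'.trace).re = 1 := by rw [h2]; simp
    rw [Matrix.trace] at h3
    rw [← h3, Complex.re_sum]
    rfl
  -- Q2R as a double sum
  have hQsum : Q2R ρ σ = ∑ i, ∑ j, Complex.normSq (ρ' i j) * (g i * g j) := by
    rw [Q2R, hmp]
    conv_lhs => rw [hρeq]
    rw [conj_mul_conj, conj_mul_conj, conj_mul_conj, trace_conj]
    rw [Matrix.mul_assoc (ρ' * Matrix.diagonal fun i => (g i : ℂ)) ρ']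
    have htr : ∀ (A : Matrix d d ℂ), (A * A).trace = ∑ i, ∑ j, A i j * A j i := by
      intro A; rw [Matrix.trace]; simp [Matrix.mul_apply, Matrix.diag]
    rw [htr, Complex.re_sum]
    refine Finset.sum_congr rfl fun i _ => ?_
    rw [Complex.re_sum]
    refine Finset.sum_congr rfl fun j _ => ?_
    rw [Matrix.mul_diagonal, Matrix.mul_diagonal]
    have hji : ρ' j i = star (ρ' i j) := by rw [← Matrix.conjTranspose_apply, hρ'H.eq]
    rw [hji]
    have h2 : ρ' i j * (g j : ℂ) * (star (ρ' i j) * (g i : ℂ))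
        = (((Complex.normSq (ρ' i j) * (g i * g j)) : ℝ) : ℂ) := by
      calc ρ' i j * (g j : ℂ) * (star (ρ' i j) * (g i : ℂ))
          = (ρ' i j * star (ρ' i j)) * ((g i : ℂ) * (g j : ℂ)) := by ring
        _ = ((Complex.normSq (ρ' i j) : ℝ) : ℂ) * ((g i : ℂ) * (g j : ℂ)) := by
            rw [Complex.star_def, Complex.mul_conj]
        _ = (((Complex.normSq (ρ' i j) * (g i * g j)) : ℝ) : ℂ) := by push_cast; ring
    rw [h2, Complex.ofReal_re]
  -- the matrix M and its spectral decomposition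
  set M : Matrix d d ℂ := ρ' - Matrix.diagonal (fun i => (e i : ℂ)) with hMdef
  have hMH : M.IsHermitian := by
    rw [hMdef]
    refine hρ'H.sub (Matrix.isHermitian_diagonal_of_self_adjoint _ (funext fun i => ?_))
    simp [Pi.star_apply, Complex.star_def, Complex.conj_ofReal]
  set V : Matrix.unitaryGroup d ℂ := hMH.eigenvectorUnitary with hVdef
  set lam : d → ℝ := hMH.eigenvalues with hlamdef
  have hMspec : M = (V : Matrix d d ℂ) * Matrix.diagonal (fun i => (lam i : ℂ)) * (V : Matrix d d ℂ)ᴴ :=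
    spectral M hMH
  have hρσ : ρ - σ = (U : Matrix d d ℂ) * M * (U : Matrix d d ℂ)ᴴ := by
    rw [hMdef, Matrix.mul_sub, Matrix.sub_mul]
    conv_lhs => rw [hρeq, hspec]
  have hMM : M * M = (V : Matrix d d ℂ) * Matrix.diagonal (fun i => ((lam i ^ 2 : ℝ) : ℂ)) * (V : Matrix d d ℂ)ᴴ := by
    conv_lhs => rw [hMspec]
    rw [conj_mul_conj, Matrix.diagonal_mul_diagonal]
    congr 1
    congr 1
    funext i
    push_cast
    ring
  have hprod : (ρ - σ)ᴴ * (ρ - σ)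
      = ((U * V : Matrix.unitaryGroup d ℂ) : Matrix d d ℂ)
        * Matrix.diagonal (fun i => ((lam i ^ 2 : ℝ) : ℂ))
        * ((U * V : Matrix.unitaryGroup d ℂ) : Matrix d d ℂ)ᴴ := by
    have hherm : ((U : Matrix d d ℂ) * M * (U : Matrix d d ℂ)ᴴ)ᴴ = (U : Matrix d d ℂ) * M * (U : Matrix d d ℂ)ᴴ := by
      simp [Matrix.conjTranspose_mul, Matrix.mul_assoc, hMH.eq]
    rw [hρσ, hherm, conj_mul_conj, hMM]
    show (U : Matrix d d ℂ) * ((V : Matrix d d ℂ) * _ * (V : Matrix d d ℂ)ᴴ) * (U : Matrix d d ℂ)ᴴ = _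
    rw [show ((U * V : Matrix.unitaryGroup d ℂ) : Matrix d d ℂ) = (U : Matrix d d ℂ) * (V : Matrix d d ℂ) from rfl]
    rw [Matrix.conjTranspose_mul]
    simp only [Matrix.mul_assoc]
  have htn : traceNorm (ρ - σ) = ∑ i, |lam i| := by
    rw [traceNorm, matPow, hprod, matFun_conj (U * V) (fun i => lam i ^ 2) _, trace_conj_diag,
      Complex.re_sum]
    refine Finset.sum_congr rfl fun i _ => ?_
    rw [Complex.ofReal_re]
    by_cases hl : lam i = 0
    · simp [hl]
    · have hl2 : lam i ^ 2 ≠ 0 := pow_ne_zero _ hl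
      rw [if_neg hl2]
      rw [show Real.rpow (lam i ^ 2) (1/2) = (lam i ^ 2) ^ ((1/2 : ℝ)) from rfl]
      rw [← Real.sqrt_eq_rpow, Real.sqrt_sq_eq_abs]
  -- the sign matrix W
  set s : d → ℝ := fun i => if lam i < 0 then -1 else if lam i = 0 then 0 else 1 with hsdef
  have hs_mul : ∀ i, lam i * s i = |lam i| := by
    intro i; rw [hsdef]; dsimp only
    rcases lt_trichotomy (lam i) 0 with h | h | h
    · rw [if_pos h, abs_of_neg h]; ring
    · simp [h]
    · rw [if_neg (not_lt.mpr h.le), if_neg h.ne', abs_of_pos h, mul_one]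
  have hs_sq : ∀ i, s i ^ 2 ≤ 1 := by
    intro i; rw [hsdef]; dsimp only
    rcases lt_trichotomy (lam i) 0 with h | h | h
    · rw [if_pos h]; norm_num
    · simp [h]
    · rw [if_neg (not_lt.mpr h.le), if_neg h.ne']; norm_num
  set W : Matrix d d ℂ := (V : Matrix d d ℂ) * Matrix.diagonal (fun i => (s i : ℂ)) * (V : Matrix d d ℂ)ᴴ with hWdef
  have hWH : W.IsHermitian := herm_conj V s
  have hMWtr : ((M * W).trace).re = ∑ i, |lam i| := by
    conv_lhs => rw [hMspec, hWdef]
    rw [conj_mul_conj, Matrix.diagonal_mul_diagonal, trace_conj_diag, Complex.re_sum]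
    refine Finset.sum_congr rfl fun i _ => ?_
    rw [← hs_mul i]
    push_cast
    simp
  have hWsq : W * W = (V : Matrix d d ℂ) * Matrix.diagonal (fun i => ((s i ^ 2 : ℝ) : ℂ)) * (V : Matrix d d ℂ)ᴴ := by
    rw [hWdef, conj_mul_conj, Matrix.diagonal_mul_diagonal]
    congr 1; congr 1; funext i; push_cast; ring
  have hVrow : ∀ i : d, ∑ k, Complex.normSq ((V : Matrix d d ℂ) i k) = 1 := by
    intro i
    have h5 := congrFun (congrFun (uSelf V) i) i
    rw [Matrix.mul_apply] at h5
    have h6 : (∑ k, (V : Matrix d d ℂ) i k * (V : Matrix d d ℂ)ᴴ k i).re = 1 := by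
      rw [h5, Matrix.one_apply_eq]; simp
    rw [← h6, Complex.re_sum]
    refine Finset.sum_congr rfl fun k _ => ?_
    rw [Matrix.conjTranspose_apply, Complex.star_def, Complex.mul_conj, Complex.ofReal_re]
  have hrow : ∀ i : d, ∑ j, Complex.normSq (W i j) ≤ 1 := by
    intro i
    have h1 : ((W * W) i i).re = ∑ j, Complex.normSq (W i j) := by
      rw [Matrix.mul_apply, Complex.re_sum]
      refine Finset.sum_congr rfl fun j _ => ?_
      have hji : W j i = star (W i j) := by rw [← Matrix.conjTranspose_apply, hWH.eq]
      rw [hji, Complex.star_def, Complex.mul_conj, Complex.ofReal_re]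
    have h2 : ((W * W) i i).re = ∑ k, s k ^ 2 * Complex.normSq ((V : Matrix d d ℂ) i k) := by
      rw [hWsq, conj_apply_diag, Complex.re_sum]
      refine Finset.sum_congr rfl fun k _ => ?_
      have h7 : (V : Matrix d d ℂ) i k * ((s k ^ 2 : ℝ) : ℂ) * star ((V : Matrix d d ℂ) i k)
          = (((s k ^ 2 * Complex.normSq ((V : Matrix d d ℂ) i k)) : ℝ) : ℂ) := by
        calc (V : Matrix d d ℂ) i k * ((s k ^ 2 : ℝ) : ℂ) * star ((V : Matrix d d ℂ) i k)
            = ((s k ^ 2 : ℝ) : ℂ) * ((V : Matrix d d ℂ) i k * star ((V : Matrix d d ℂ) i k)) := by ring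
          _ = _ := by rw [Complex.star_def, Complex.mul_conj]; push_cast; ring
      rw [h7, Complex.ofReal_re]
    have h3 : ∑ k, s k ^ 2 * Complex.normSq ((V : Matrix d d ℂ) i k)
        ≤ ∑ k, Complex.normSq ((V : Matrix d d ℂ) i k) := by
      refine Finset.sum_le_sum fun k _ => ?_
      have hnn := Complex.normSq_nonneg ((V : Matrix d d ℂ) i k)
      nlinarith [hs_sq k]
    have h4 := hVrow i
    rw [← h1]
    rw [h2]
    linarith
  have hcolW : ∀ j : d, ∑ i, Complex.normSq (W i j) ≤ 1 := by
    intro j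
    have : ∀ i : d, Complex.normSq (W i j) = Complex.normSq (W j i) := by
      intro i
      have hji : W i j = star (W j i) := by rw [← Matrix.conjTranspose_apply, hWH.eq]
      rw [hji, Complex.star_def, Complex.normSq_conj]
    rw [Finset.sum_congr rfl fun i _ => this i]
    exact hrow j
  -- scalar work
  set T : ℝ := ∑ i, |lam i| with hTdef
  have hTnn : 0 ≤ T := Finset.sum_nonneg fun i _ => abs_nonneg _
  have hTsum : T = ∑ i, ∑ j, (M i j * W j i).re := by
    rw [← hMWtr, Matrix.trace]
    simp only [Matrix.diag, Matrix.mul_apply]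
    rw [Complex.re_sum]
    exact Finset.sum_congr rfl fun i _ => by rw [Complex.re_sum]
  set q : d → ℝ := fun i => Real.sqrt (g i) with hqdef
  set p : d → ℝ := fun i => Real.sqrt (Real.sqrt (e i)) with hpdef
  have hq2 : ∀ i, q i ^ 2 = g i := fun i => Real.sq_sqrt (hg0 i)
  have hp2 : ∀ i, p i ^ 2 = Real.sqrt (e i) := fun i => Real.sq_sqrt (Real.sqrt_nonneg _)
  have hqp : ∀ i, e i ≠ 0 → q i * p i = 1 := by
    intro i hi
    have hepos : 0 < e i := lt_of_le_of_ne (he0 i) (Ne.symm hi)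
    have hsne : Real.sqrt (e i) ≠ 0 := by
      rw [Real.sqrt_ne_zero' ]; exact hepos
    rw [hqdef, hpdef]; dsimp only
    rw [← Real.sqrt_mul (hg0 i), hgsq i hi, inv_mul_cancel₀ hsne, Real.sqrt_one]
  have hMz : ∀ i j, e i = 0 ∨ e j = 0 → M i j = 0 := by
    intro i j h
    rw [hMdef, Matrix.sub_apply, hzero i j h, Matrix.diagonal_apply, zero_sub, neg_eq_zero]
    split
    · rename_i hij
      subst hij
      rcases h with h | h <;> simp [h]
    · rfl
  set a : d → d → ℝ := fun i j => ‖M i j‖ * (q i * q j) with hadef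
  set b : d → d → ℝ := fun i j => ‖W j i‖ * (p i * p j) with hbdef
  have hstepA : ∀ i j, (M i j * W j i).re ≤ a i j * b i j := by
    intro i j
    by_cases hez : e i = 0 ∨ e j = 0
    · rw [hMz i j hez]
      simp only [hadef, hbdef, hMz i j hez, norm_zero, zero_mul, Complex.zero_re]
      positivity
    push_neg at hez
    have h1 : q i * p i = 1 := hqp i hez.1
    have h2 : q j * p j = 1 := hqp j hez.2
    calc (M i j * W j i).re ≤ ‖M i j‖ * ‖W j i‖ := by
          calc (M i j * W j i).re ≤ ‖M i j * W j i‖ := Complex.re_le_norm _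
            _ = _ := by rw [norm_mul]
      _ = a i j * b i j := by
          rw [hadef, hbdef]; dsimp only
          rw [show ‖M i j‖ * (q i * q j) * (‖W j i‖ * (p i * p j))
              = ‖M i j‖ * ‖W j i‖ * ((q i * p i) * (q j * p j)) from by ring,
            h1, h2]
          ring
  set K : ℝ := ∑ i, ∑ j, Complex.normSq (M i j) * (g i * g j) with hKdef
  have hK0 : 0 ≤ K := by
    refine Finset.sum_nonneg fun i _ => Finset.sum_nonneg fun j _ => ?_
    exact mul_nonneg (Complex.normSq_nonneg _) (mul_nonneg (hg0 i) (hg0 j))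
  have ha2 : ∑ i, ∑ j, a i j ^ 2 = K := by
    refine Finset.sum_congr rfl fun i _ => Finset.sum_congr rfl fun j _ => ?_
    rw [hadef]; dsimp only
    rw [mul_pow, mul_pow, hq2, hq2, Complex.sq_norm]
  have hb2 : ∑ i, ∑ j, b i j ^ 2 ≤ 1 := by
    have hterm : ∀ i j, b i j ^ 2 ≤ Complex.normSq (W j i) * ((e i + e j) / 2) := by
      intro i j
      rw [hbdef]; dsimp only
      rw [mul_pow, mul_pow, hp2, hp2, Complex.sq_norm]
      have hAM : Real.sqrt (e i) * Real.sqrt (e j) ≤ (e i + e j) / 2 := by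
        nlinarith [Real.sq_sqrt (he0 i), Real.sq_sqrt (he0 j), sq_nonneg (Real.sqrt (e i) - Real.sqrt (e j)), Real.sqrt_nonneg (e i), Real.sqrt_nonneg (e j)]
      exact mul_le_mul_of_nonneg_left hAM (Complex.normSq_nonneg _)
    have hsum1 : ∑ i, ∑ j, Complex.normSq (W j i) * e i ≤ 1 := by
      have : ∀ i : d, ∑ j, Complex.normSq (W j i) * e i ≤ e i := by
        intro i
        rw [← Finset.sum_mul]
        calc (∑ j, Complex.normSq (W j i)) * e i ≤ 1 * e i :=
              mul_le_mul_of_nonneg_right (hcolW i) (he0 i)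
          _ = e i := one_mul _
      calc ∑ i, ∑ j, Complex.normSq (W j i) * e i ≤ ∑ i, e i :=
            Finset.sum_le_sum fun i _ => this i
        _ = 1 := htσ
    have hsum2 : ∑ i, ∑ j, Complex.normSq (W j i) * e j ≤ 1 := by
      rw [Finset.sum_comm]
      have : ∀ j : d, ∑ i, Complex.normSq (W j i) * e j ≤ e j := by
        intro j
        rw [← Finset.sum_mul]
        calc (∑ i, Complex.normSq (W j i)) * e j ≤ 1 * e j := by
              refine mul_le_mul_of_nonneg_right ?_ (he0 j)
              have : ∀ i : d, Complex.normSq (W j i) = Complex.normSq (W i j) := by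
                intro i
                have hji : W j i = star (W i j) := by rw [← Matrix.conjTranspose_apply, hWH.eq]
                rw [hji, Complex.star_def, Complex.normSq_conj]
              rw [Finset.sum_congr rfl fun i _ => this i]
              exact hcolW j
          _ = e j := one_mul _
      calc ∑ j, ∑ i, Complex.normSq (W j i) * e j ≤ ∑ j, e j :=
            Finset.sum_le_sum fun j _ => this j
        _ = 1 := htσ
    calc ∑ i, ∑ j, b i j ^ 2 ≤ ∑ i, ∑ j, Complex.normSq (W j i) * ((e i + e j) / 2) :=
          Finset.sum_le_sum fun i _ => Finset.sum_le_sum fun j _ => hterm i j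
      _ = (∑ i, ∑ j, Complex.normSq (W j i) * e i) / 2
          + (∑ i, ∑ j, Complex.normSq (W j i) * e j) / 2 := by
          rw [Finset.sum_div, Finset.sum_div, ← Finset.sum_add_distrib]
          refine Finset.sum_congr rfl fun i _ => ?_
          rw [Finset.sum_div, Finset.sum_div, ← Finset.sum_add_distrib]
          refine Finset.sum_congr rfl fun j _ => ?_
          ring
      _ ≤ 1 := by linarith
  -- Cauchy-Schwarz
  have hCS : (∑ i, ∑ j, a i j * b i j) ^ 2 ≤ (∑ i, ∑ j, a i j ^ 2) * (∑ i, ∑ j, b i j ^ 2) := by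
    have h := Finset.sum_mul_sq_le_sq_mul_sq Finset.univ
      (fun x : d × d => a x.1 x.2) (fun x : d × d => b x.1 x.2)
    simpa [Fintype.sum_prod_type] using h
  have hTle : T ≤ ∑ i, ∑ j, a i j * b i j := by
    rw [hTsum]
    exact Finset.sum_le_sum fun i _ => Finset.sum_le_sum fun j _ => hstepA i j
  have habnn : 0 ≤ ∑ i, ∑ j, a i j * b i j := le_trans hTnn hTle
  have hT2 : T ^ 2 ≤ K := by
    calc T ^ 2 ≤ (∑ i, ∑ j, a i j * b i j) ^ 2 := pow_le_pow_left₀ hTnn hTle 2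
      _ ≤ (∑ i, ∑ j, a i j ^ 2) * (∑ i, ∑ j, b i j ^ 2) := hCS
      _ ≤ K * 1 := by
          rw [ha2]
          exact mul_le_mul_of_nonneg_left hb2 hK0
      _ = K := mul_one K
  -- K = Q2R - 1
  have hper : ∀ i j, Complex.normSq (ρ' i j) * (g i * g j) - Complex.normSq (M i j) * (g i * g j)
      = if i = j then 2 * t i - e i else 0 := by
    intro i j
    by_cases hij : i = j
    · subst hij
      rw [if_pos rfl]
      have hMii : M i i = ((t i - e i : ℝ) : ℂ) := by
        rw [hMdef, Matrix.sub_apply, (hdiag i).1, Matrix.diagonal_apply_eq]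
        push_cast; ring
      rw [hMii, (hdiag i).1, Complex.normSq_ofReal, Complex.normSq_ofReal]
      by_cases hei : e i = 0
      · have hti : t i = 0 := by
          have hz := hcol i hei i
          rw [htdef]; dsimp only; rw [hz]; simp
        have hgi : g i = 0 := by rw [hgdef]; dsimp only; rw [if_pos hei]
        rw [hei, hti, hgi]; ring
      · have hepos : 0 < e i := lt_of_le_of_ne (he0 i) (Ne.symm hei)
        have hsq : g i * g i = (e i)⁻¹ := by
          rw [hgsq i hei, ← mul_inv, Real.mul_self_sqrt hepos.le]
        rw [hsq]
        field_simp
        ring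
    · rw [if_neg hij]
      have hMij : M i j = ρ' i j := by
        rw [hMdef, Matrix.sub_apply, Matrix.diagonal_apply_ne _ hij, sub_zero]
      rw [hMij]; ring
  have hKQ : Q2R ρ σ = K + 1 := by
    have hsub : Q2R ρ σ - K = 1 := by
      rw [hQsum, hKdef, ← Finset.sum_sub_distrib]
      have : ∀ i : d, (∑ j, Complex.normSq (ρ' i j) * (g i * g j))
          - (∑ j, Complex.normSq (M i j) * (g i * g j)) = 2 * t i - e i := by
        intro i
        rw [← Finset.sum_sub_distrib]
        rw [Finset.sum_congr rfl fun j _ => hper i j]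
        simp
      rw [Finset.sum_congr rfl fun i _ => this i, Finset.sum_sub_distrib, ← Finset.mul_sum, htρ, htσ]
      norm_num
    linarith
  -- conclusion
  have hfinal : 1 + traceNorm (ρ - σ) ^ 2 ≤ Q2R ρ σ := by
    rw [htn, hKQ]
    linarith
  have hpos : 0 < Q2R ρ σ := lt_of_lt_of_le (by positivity) hfinal
  rw [D2, Q2, if_pos hsupp, ENNReal.log_ofReal_of_pos hpos]
  have hlog : Real.log (1 + traceNorm (ρ - σ) ^ 2) ≤ Real.log (Q2R ρ σ) :=
    Real.log_le_log (by positivity) hfinal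
  exact EReal.coe_le_coe_iff.mpr hlog
end
end

section
/- For all density matrices ρ and σ on the same finite-dimensional complex Hilbert space with the support of ρ contained in the support of σ, the purified distance satisfies P²(ρ,σ) ≤ 1 − 1/Q₂(ρ‖σ); equivalently, D₂(ρ‖σ) ≥ −log(1 − P²(ρ,σ)). -/
open scoped Matrix Kronecker BigOperators ENNReal ComplexOrder Classical

noncomputable section

variable {d : Type*} [Fintype d] [DecidableEq d]

namespace PfAux


open Matrix

variable {A : Matrix d d ℂ}

lemma star_mul_self_unit (hA : A.IsHermitian) :
    (hA.eigenvectorUnitary : Matrix d d ℂ)ᴴ * (hA.eigenvectorUnitary : Matrix d d ℂ) = 1 := by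
  rw [← Matrix.star_eq_conjTranspose]
  exact Matrix.mem_unitaryGroup_iff'.mp hA.eigenvectorUnitary.2

lemma mul_star_self_unit (hA : A.IsHermitian) :
    (hA.eigenvectorUnitary : Matrix d d ℂ) * (hA.eigenvectorUnitary : Matrix d d ℂ)ᴴ = 1 := by
  rw [← Matrix.star_eq_conjTranspose]
  exact Matrix.mem_unitaryGroup_iff.mp hA.eigenvectorUnitary.2

lemma spectral (hA : A.IsHermitian) :
    A = (hA.eigenvectorUnitary : Matrix d d ℂ) *
      Matrix.diagonal (fun i => (hA.eigenvalues i : ℂ)) *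
      (hA.eigenvectorUnitary : Matrix d d ℂ)ᴴ := by
  conv_lhs => rw [hA.spectral_theorem]
  rfl

lemma conj_diag (hA : A.IsHermitian) :
    (hA.eigenvectorUnitary : Matrix d d ℂ)ᴴ * A * (hA.eigenvectorUnitary : Matrix d d ℂ) =
      Matrix.diagonal (fun i => (hA.eigenvalues i : ℂ)) := by
  have e : (hA.eigenvectorUnitary : Matrix d d ℂ)ᴴ * A * (hA.eigenvectorUnitary : Matrix d d ℂ) = (hA.eigenvectorUnitary : Matrix d d ℂ)ᴴ * ((hA.eigenvectorUnitary : Matrix d d ℂ) * Matrix.diagonal (fun i => (hA.eigenvalues i : ℂ)) * (hA.eigenvectorUnitary : Matrix d d ℂ)ᴴ) * (hA.eigenvectorUnitary : Matrix d d ℂ) := by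
    rw [← spectral hA]
  rw [e]
  simp only [Matrix.mul_assoc]
  rw [star_mul_self_unit hA, Matrix.mul_one, ← Matrix.mul_assoc, star_mul_self_unit hA,
    Matrix.one_mul]

lemma herFun_congr (hA : A.IsHermitian) {f g : ℝ → ℝ}
    (h : ∀ i, f (hA.eigenvalues i) = g (hA.eigenvalues i)) : herFun hA f = herFun hA g := by
  have : (fun i => (f (hA.eigenvalues i) : ℂ)) = fun i => (g (hA.eigenvalues i) : ℂ) :=
    funext fun i => by rw [h i]
  unfold herFun
  rw [this]

lemma conj_sandwich_mul {u B C : Matrix d d ℂ} (h : uᴴ * u = 1) :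
    (u * B * uᴴ) * (u * C * uᴴ) = u * (B * C) * uᴴ := by
  calc (u * B * uᴴ) * (u * C * uᴴ) = u * B * (uᴴ * u) * C * uᴴ := by
        simp only [Matrix.mul_assoc]
      _ = u * (B * C) * uᴴ := by rw [h, Matrix.mul_one]; simp only [Matrix.mul_assoc]

lemma herFun_mul (hA : A.IsHermitian) (f g : ℝ → ℝ) :
    herFun hA f * herFun hA g = herFun hA (fun x => f x * g x) := by
  unfold herFun
  rw [conj_sandwich_mul (star_mul_self_unit hA), Matrix.diagonal_mul_diagonal]
  congr 2
  funext i
  push_cast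
  ring

lemma herFun_isHermitian (hA : A.IsHermitian) (f : ℝ → ℝ) : (herFun hA f).IsHermitian := by
  unfold Matrix.IsHermitian herFun
  simp only [Matrix.conjTranspose_mul, Matrix.conjTranspose_conjTranspose, Matrix.diagonal_conjTranspose]
  rw [Matrix.mul_assoc]
  congr 1
  have : star (fun i => (f (hA.eigenvalues i) : ℂ)) = fun i => (f (hA.eigenvalues i) : ℂ) := by
    funext i
    simp [Pi.star_apply, Complex.star_def]
  rw [this]

lemma trace_herFun (hA : A.IsHermitian) (f : ℝ → ℝ) :
    Matrix.trace (herFun hA f) = ∑ i, (f (hA.eigenvalues i) : ℂ) := by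
  unfold herFun
  rw [Matrix.trace_mul_cycle, star_mul_self_unit hA, Matrix.one_mul, Matrix.trace_diagonal]

lemma herFun_id (hA : A.IsHermitian) : herFun hA (fun x => x) = A := by
  conv_rhs => rw [spectral hA]
  rfl

lemma herFun_posSemidef (hA : A.IsHermitian) {f : ℝ → ℝ}
    (hf : ∀ i, 0 ≤ f (hA.eigenvalues i)) : (herFun hA f).PosSemidef := by
  unfold herFun
  refine Matrix.PosSemidef.mul_mul_conjTranspose_same ?_ _
  refine Matrix.posSemidef_diagonal_iff.mpr fun i => ?_
  exact_mod_cast hf i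

/-- the function used in `matPow` -/
def pf (r : ℝ) : ℝ → ℝ := fun x => if x = 0 then 0 else Real.rpow x r

lemma matPow_eq (hA : A.IsHermitian) (r : ℝ) : matPow A r = herFun hA (pf r) := by
  unfold matPow matFun pf
  rw [dif_pos hA]

lemma pf_nonneg {x : ℝ} (hx : 0 ≤ x) (r : ℝ) : 0 ≤ pf r x := by
  unfold pf
  split
  · exact le_refl 0
  · exact Real.rpow_nonneg hx r

lemma pf_eq_rpow {x : ℝ} (hx : 0 ≤ x) {r : ℝ} (hr : r ≠ 0) : pf r x = x ^ r := by
  unfold pf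
  split
  · rename_i h0
    rw [h0, Real.zero_rpow hr]
  · rfl

lemma matPow_posSemidef (hA : A.PosSemidef) (r : ℝ) : (matPow A r).PosSemidef := by
  rw [matPow_eq hA.1]
  exact herFun_posSemidef hA.1 fun i => pf_nonneg (hA.eigenvalues_nonneg i) r

lemma matPow_isHermitian (hA : A.PosSemidef) (r : ℝ) : (matPow A r).IsHermitian :=
  (matPow_posSemidef hA r).1

lemma matPow_conjTranspose (hA : A.PosSemidef) (r : ℝ) : (matPow A r)ᴴ = matPow A r :=
  (matPow_isHermitian hA r)

lemma matPow_mul (hA : A.PosSemidef) (r s : ℝ) :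
    matPow A r * matPow A s = matPow A (r + s) := by
  rw [matPow_eq hA.1, matPow_eq hA.1, matPow_eq hA.1, herFun_mul]
  refine herFun_congr hA.1 fun i => ?_
  have h := hA.eigenvalues_nonneg i
  unfold pf
  rcases eq_or_lt_of_le h with h0 | h0
  · simp [← h0]
  · rw [if_neg h0.ne', if_neg h0.ne', if_neg h0.ne']
    exact (Real.rpow_add h0 r s).symm

lemma matPow_one (hA : A.PosSemidef) : matPow A 1 = A := by
  rw [matPow_eq hA.1]
  conv_rhs => rw [← herFun_id hA.1]
  refine herFun_congr hA.1 fun i => ?_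
  unfold pf
  split
  · rename_i h0
    rw [h0]
  · exact Real.rpow_one _

lemma sigma_mul_proj (hσ : A.PosSemidef) : A * matPow A 0 = A := by
  nth_rewrite 1 [← matPow_one hσ]
  rw [matPow_mul hσ, add_zero, matPow_one hσ]

lemma proj_mul_sigma (hσ : A.PosSemidef) : matPow A 0 * A = A := by
  nth_rewrite 2 [← matPow_one hσ]
  rw [matPow_mul hσ, zero_add, matPow_one hσ]

lemma mul_proj_self {ρ σ : Matrix d d ℂ} (hρ : ρ.IsHermitian) (hσ : σ.PosSemidef)
    (h : LinearMap.ker σ.mulVecLin ≤ LinearMap.ker ρ.mulVecLin) :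
    ρ * matPow σ 0 = ρ ∧ matPow σ 0 * ρ = ρ := by
  have hz : ρ * (1 - matPow σ 0) = 0 := by
    have hσz : σ * (1 - matPow σ 0) = 0 := by
      rw [Matrix.mul_sub, Matrix.mul_one, sigma_mul_proj hσ, sub_self]
    have hcol : ∀ v : d → ℂ, (ρ * (1 - matPow σ 0)).mulVec v = 0 := by
      intro v
      rw [← Matrix.mulVec_mulVec]
      have hker : (1 - matPow σ 0).mulVec v ∈ LinearMap.ker σ.mulVecLin := by
        rw [LinearMap.mem_ker, Matrix.mulVecLin_apply, Matrix.mulVec_mulVec, hσz,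
          Matrix.zero_mulVec]
      have := h hker
      rwa [LinearMap.mem_ker, Matrix.mulVecLin_apply] at this
    ext i j
    have h2 := congrFun (hcol (Pi.single j 1)) i
    rw [Matrix.mulVec_single] at h2
    simpa using h2
  have h1 : ρ * matPow σ 0 = ρ := by
    have := hz
    rw [Matrix.mul_sub, Matrix.mul_one, sub_eq_zero] at this
    exact this.symm
  refine ⟨h1, ?_⟩
  have := congrArg Matrix.conjTranspose h1
  rwa [Matrix.conjTranspose_mul, matPow_conjTranspose hσ, hρ.eq] at this

lemma trace_diagonal_mul (v : d → ℂ) (M : Matrix d d ℂ) :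
    Matrix.trace (Matrix.diagonal v * M) = ∑ i, v i * M i i := by
  unfold Matrix.trace
  congr 1
  funext i
  rw [Matrix.diag_apply, Matrix.diagonal_mul]

lemma trace_herFun_mul (hA : A.IsHermitian) (f : ℝ → ℝ) (G : Matrix d d ℂ) :
    Matrix.trace (herFun hA f * G) = ∑ i, (f (hA.eigenvalues i) : ℂ) *
      (((hA.eigenvectorUnitary : Matrix d d ℂ)ᴴ * G * (hA.eigenvectorUnitary : Matrix d d ℂ)) i i) := by
  unfold herFun
  have : (hA.eigenvectorUnitary : Matrix d d ℂ) * Matrix.diagonal (fun i => (f (hA.eigenvalues i) : ℂ)) *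
      (hA.eigenvectorUnitary : Matrix d d ℂ)ᴴ * G =
      (hA.eigenvectorUnitary : Matrix d d ℂ) * (Matrix.diagonal (fun i => (f (hA.eigenvalues i) : ℂ)) *
      ((hA.eigenvectorUnitary : Matrix d d ℂ)ᴴ * G)) := by
    simp only [Matrix.mul_assoc]
  rw [this, Matrix.trace_mul_comm, Matrix.mul_assoc, Matrix.mul_assoc, trace_diagonal_mul]

lemma re_trace_herFun_mul (hA : A.IsHermitian) (f : ℝ → ℝ) (G : Matrix d d ℂ) :
    (Matrix.trace (herFun hA f * G)).re = ∑ i, f (hA.eigenvalues i) *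
      ((((hA.eigenvectorUnitary : Matrix d d ℂ)ᴴ * G * (hA.eigenvectorUnitary : Matrix d d ℂ)) i i).re) := by
  rw [trace_herFun_mul hA f G, Complex.re_sum]
  congr 1
  funext i
  simp [Complex.mul_re]

lemma re_diag_entry_herFun (hA : A.IsHermitian) (f : ℝ → ℝ) (V : Matrix d d ℂ) (i : d) :
    ((Vᴴ * herFun hA f * V) i i).re
      = ∑ j, f (hA.eigenvalues j) *
          Complex.normSq (((hA.eigenvectorUnitary : Matrix d d ℂ)ᴴ * V) j i) := by
  set U := (hA.eigenvectorUnitary : Matrix d d ℂ) with hU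
  set M := Uᴴ * V with hM
  have hmat : Vᴴ * herFun hA f * V =
      Mᴴ * Matrix.diagonal (fun j => (f (hA.eigenvalues j) : ℂ)) * M := by
    unfold herFun
    rw [hM, Matrix.conjTranspose_mul, Matrix.conjTranspose_conjTranspose]
    simp only [Matrix.mul_assoc]
    rfl
  rw [hmat, Matrix.mul_apply, Complex.re_sum]
  congr 1
  funext j
  rw [Matrix.mul_diagonal, Matrix.conjTranspose_apply]
  have : star (M j i) * (f (hA.eigenvalues j) : ℂ) * M j i
      = (f (hA.eigenvalues j) : ℂ) * (M j i * star (M j i)) := by ring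
  rw [this, Complex.star_def, Complex.mul_conj]
  simp [Complex.mul_re]

lemma col_normSq_one {U V : Matrix d d ℂ} (hU : U * Uᴴ = 1) (hV : Vᴴ * V = 1) (i : d) :
    ∑ j, Complex.normSq ((Uᴴ * V) j i) = 1 := by
  set M := Uᴴ * V with hM
  have hMM : Mᴴ * M = 1 := by
    rw [hM, Matrix.conjTranspose_mul, Matrix.conjTranspose_conjTranspose]
    calc Vᴴ * U * (Uᴴ * V) = Vᴴ * (U * Uᴴ) * V := by simp only [Matrix.mul_assoc]
      _ = 1 := by rw [hU, Matrix.mul_one, hV]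
  have h1 : ((Mᴴ * M) i i).re = 1 := by rw [hMM]; simp
  rw [Matrix.mul_apply, Complex.re_sum] at h1
  rw [← h1]
  congr 1
  funext j
  rw [Matrix.conjTranspose_apply]
  rw [show star (M j i) * M j i = M j i * star (M j i) from mul_comm _ _, Complex.star_def,
    Complex.mul_conj]
  simp

lemma re_trace_le_trace_sqrt (C : Matrix d d ℂ) :
    (Matrix.trace C).re ≤ (Matrix.trace (matPow (Cᴴ * C) (1/2))).re := by
  have hB : (Cᴴ * C).PosSemidef := Matrix.posSemidef_conjTranspose_mul_self C
  set V := (hB.1.eigenvectorUnitary : Matrix d d ℂ) with hVdef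
  set b := hB.1.eigenvalues with hbdef
  have hrhs : (Matrix.trace (matPow (Cᴴ * C) (1/2))).re = ∑ i, Real.sqrt (b i) := by
    rw [matPow_eq hB.1, trace_herFun, Complex.re_sum]
    congr 1
    funext i
    rw [Complex.ofReal_re, pf_eq_rpow (hB.eigenvalues_nonneg i) (by norm_num),
      ← Real.sqrt_eq_rpow]
  set D := Vᴴ * C * V with hDdef
  have htr : Matrix.trace D = Matrix.trace C := by
    rw [hDdef, Matrix.trace_mul_cycle, mul_star_self_unit hB.1, Matrix.one_mul]
  have hDD : Dᴴ * D = Matrix.diagonal (fun i => (b i : ℂ)) := by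
    rw [hDdef, Matrix.conjTranspose_mul, Matrix.conjTranspose_mul,
      Matrix.conjTranspose_conjTranspose]
    calc Vᴴ * (Cᴴ * V) * (Vᴴ * C * V)
        = Vᴴ * Cᴴ * (V * Vᴴ) * C * V := by simp only [Matrix.mul_assoc]
      _ = Vᴴ * (Cᴴ * C) * V := by
          rw [mul_star_self_unit hB.1, Matrix.mul_one]
          simp only [Matrix.mul_assoc]
      _ = Matrix.diagonal (fun i => (b i : ℂ)) := conj_diag hB.1
  have hcol : ∀ i, Complex.normSq (D i i) ≤ b i := by
    intro i
    have h1 : ((Dᴴ * D) i i).re = b i := by rw [hDD]; simp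
    rw [Matrix.mul_apply, Complex.re_sum] at h1
    have h2 : ∑ j, Complex.normSq (D j i) = b i := by
      rw [← h1]
      congr 1
      funext j
      rw [Matrix.conjTranspose_apply,
        show star (D j i) * D j i = D j i * star (D j i) from mul_comm _ _, Complex.star_def,
        Complex.mul_conj]
      simp
    rw [← h2]
    exact Finset.single_le_sum (f := fun j => Complex.normSq (D j i))
      (fun j _ => Complex.normSq_nonneg _) (Finset.mem_univ i)
  rw [hrhs, ← htr]
  unfold Matrix.trace
  rw [Complex.re_sum]
  refine Finset.sum_le_sum fun i _ => ?_
  calc (Matrix.diag D i).re ≤ ‖D i i‖ := Complex.re_le_norm _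
    _ = Real.sqrt (Complex.normSq (D i i)) := Complex.norm_def _
    _ ≤ Real.sqrt (b i) := Real.sqrt_le_sqrt (hcol i)

lemma key_ineq {ρ σ : Matrix d d ℂ} (hρ : ρ.PosSemidef) (hρt : ρ.trace = 1)
    (hσ : σ.PosSemidef) (hσt : σ.trace = 1)
    (h : LinearMap.ker σ.mulVecLin ≤ LinearMap.ker ρ.mulVecLin) :
    1 ≤ Q2R ρ σ ∧ 0 ≤ fidelity ρ σ ∧ 1 ≤ fidelity ρ σ ^ 2 * Q2R ρ σ := by
  classical
  set σni := matPow σ (-(1/4)) with hσni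
  set X := σni * ρ * σni with hXdef
  have hσniH : σniᴴ = σni := matPow_conjTranspose hσ _
  have hX : X.PosSemidef := by
    have h2 := hρ.mul_mul_conjTranspose_same σni
    rw [hσniH] at h2
    rw [hXdef]
    exact h2
  have hXh : X.IsHermitian := hX.1
  set V := (hXh.eigenvectorUnitary : Matrix d d ℂ) with hVdef
  set x := hXh.eigenvalues with hxdef
  have hx0 : ∀ i, 0 ≤ x i := hX.eigenvalues_nonneg
  set U := (hσ.1.eigenvectorUnitary : Matrix d d ℂ) with hUdef
  set q := hσ.1.eigenvalues with hqdef
  have hq0 : ∀ j, 0 ≤ q j := hσ.eigenvalues_nonneg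
  set w : d → d → ℝ := fun i j => Complex.normSq ((Uᴴ * V) j i) with hwdef
  have hw0 : ∀ i j, 0 ≤ w i j := fun i j => Complex.normSq_nonneg _
  have hw1 : ∀ i, ∑ j, w i j = 1 := fun i =>
    col_normSq_one (mul_star_self_unit hσ.1) (star_mul_self_unit hXh) i
  set s : d → ℝ := fun i => ((Vᴴ * matPow σ (1/2) * V) i i).re with hsdef
  set t : d → ℝ := fun i => ((Vᴴ * matPow σ (3/4) * V) i i).re with htdef
  set u : d → ℝ := fun i => ((Vᴴ * σ * V) i i).re with hudef
  -- expansions of s, t, u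
  have hsexp : ∀ i, s i = ∑ j, pf (1/2) (q j) * w i j := by
    intro i
    simp only [hsdef]
    rw [matPow_eq hσ.1, re_diag_entry_herFun hσ.1 (pf (1/2)) V i]
  have htexp : ∀ i, t i = ∑ j, pf (3/4) (q j) * w i j := by
    intro i
    simp only [htdef]
    rw [matPow_eq hσ.1, re_diag_entry_herFun hσ.1 (pf (3/4)) V i]
  have huexp : ∀ i, u i = ∑ j, q j * w i j := by
    intro i
    simp only [hudef]
    conv_lhs => rw [← herFun_id hσ.1]
    rw [re_diag_entry_herFun hσ.1 (fun y => y) V i]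
  have hs0 : ∀ i, 0 ≤ s i := by
    intro i
    rw [hsexp i]
    exact Finset.sum_nonneg fun j _ => mul_nonneg (pf_nonneg (hq0 j) _) (hw0 i j)
  have ht0 : ∀ i, 0 ≤ t i := by
    intro i
    rw [htexp i]
    exact Finset.sum_nonneg fun j _ => mul_nonneg (pf_nonneg (hq0 j) _) (hw0 i j)
  -- cyclic trace helper
  have cyc : ∀ G : Matrix d d ℂ,
      Matrix.trace (X * G) = Matrix.trace (ρ * (σni * G * σni)) := by
    intro G
    rw [hXdef]
    calc Matrix.trace (σni * ρ * σni * G)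
        = Matrix.trace ((σni * ρ) * (σni * G)) := by congr 1; simp only [Matrix.mul_assoc]
      _ = Matrix.trace ((σni * G) * (σni * ρ)) := Matrix.trace_mul_comm _ _
      _ = Matrix.trace ((σni * G * σni) * ρ) := by congr 1; simp only [Matrix.mul_assoc]
      _ = Matrix.trace (ρ * (σni * G * σni)) := Matrix.trace_mul_comm _ _
  -- (1) Q2R = ∑ x_i^2
  have hQ : Q2R ρ σ = ∑ i, x i ^ 2 := by
    have hhalf : σni * σni = matPow σ (-(1/2)) := by
      rw [hσni, matPow_mul hσ, show (-(1/4 : ℝ) + -(1/4)) = -(1/2) by norm_num]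
    have e0 : Matrix.trace (ρ * matPow σ (-(1/2)) * ρ * matPow σ (-(1/2)))
        = Matrix.trace (X * X) := by
      rw [cyc X, ← hhalf, hXdef]
      congr 1
      simp only [Matrix.mul_assoc]
    have e1 := trace_herFun_mul hXh (fun y => y) X
    rw [herFun_id hXh, conj_diag hXh] at e1
    have : Q2R ρ σ = (Matrix.trace (ρ * matPow σ (-(1/2)) * ρ * matPow σ (-(1/2)))).re := rfl
    rw [this, e0, e1, Complex.re_sum]
    congr 1
    funext i
    rw [Matrix.diagonal_apply_eq]
    rw [show ((x i : ℂ) * (x i : ℂ)) = ((x i * x i : ℝ) : ℂ) by push_cast; ring]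
    rw [Complex.ofReal_re, sq]
  -- (2) ∑ x_i s_i = 1
  have h1 : ∑ i, x i * s i = 1 := by
    have e2 : Matrix.trace (X * matPow σ (1/2)) = Matrix.trace ρ := by
      rw [cyc]
      have hp : σni * matPow σ (1/2) * σni = matPow σ 0 := by
        rw [hσni, matPow_mul hσ, matPow_mul hσ,
          show (-(1/4 : ℝ) + 1/2 + -(1/4)) = 0 by norm_num]
      rw [hp, (mul_proj_self hρ.1 hσ h).1]
    have e3 := re_trace_herFun_mul hXh (fun y => y) (matPow σ (1/2))
    rw [herFun_id hXh] at e3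
    rw [← e3, e2, hρt]
    simp
  -- (3) fidelity lower bound
  have hFexp : ∑ i, pf (1/2) (x i) * t i ≤ fidelity ρ σ := by
    have hC : (matPow ρ (1/2) * matPow σ (1/2))ᴴ * (matPow ρ (1/2) * matPow σ (1/2))
        = (matPow X (1/2) * matPow σ (3/4))ᴴ * (matPow X (1/2) * matPow σ (3/4)) := by
      rw [Matrix.conjTranspose_mul, Matrix.conjTranspose_mul,
        matPow_conjTranspose hρ, matPow_conjTranspose hσ,
        matPow_conjTranspose hX, matPow_conjTranspose hσ]
      calc matPow σ (1/2) * matPow ρ (1/2) * (matPow ρ (1/2) * matPow σ (1/2))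
          = matPow σ (1/2) * (matPow ρ (1/2) * matPow ρ (1/2)) * matPow σ (1/2) := by
            simp only [Matrix.mul_assoc]
        _ = matPow σ (1/2) * ρ * matPow σ (1/2) := by
            rw [matPow_mul hρ, show (1/2 : ℝ) + 1/2 = 1 by norm_num, matPow_one hρ]
        _ = matPow σ (3/4) * (matPow X (1/2) * (matPow X (1/2) * matPow σ (3/4))) := by
            rw [show matPow X (1/2) * (matPow X (1/2) * matPow σ (3/4))
                = (matPow X (1/2) * matPow X (1/2)) * matPow σ (3/4) by
                  simp only [Matrix.mul_assoc],
              matPow_mul hX, show (1/2 : ℝ) + 1/2 = 1 by norm_num, matPow_one hX, hXdef, hσni]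
            calc matPow σ (1/2) * ρ * matPow σ (1/2)
                = (matPow σ (3/4) * matPow σ (-(1/4))) * ρ *
                    (matPow σ (-(1/4)) * matPow σ (3/4)) := by
                  rw [matPow_mul hσ, matPow_mul hσ]
                  norm_num
              _ = matPow σ (3/4) * (matPow σ (-(1/4)) * ρ * matPow σ (-(1/4)) * matPow σ (3/4)) := by
                  simp only [Matrix.mul_assoc]
        _ = matPow σ (3/4) * matPow X (1/2) * (matPow X (1/2) * matPow σ (3/4)) := by
            simp only [Matrix.mul_assoc]
    have hfid : fidelity ρ σ =
        (Matrix.trace (matPow ((matPow X (1/2) * matPow σ (3/4))ᴴ *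
          (matPow X (1/2) * matPow σ (3/4))) (1/2))).re := by
      rw [show fidelity ρ σ = (Matrix.trace (matPow ((matPow ρ (1/2) * matPow σ (1/2))ᴴ *
        (matPow ρ (1/2) * matPow σ (1/2))) (1/2))).re from rfl, hC]
    rw [hfid]
    refine le_trans (le_of_eq ?_) (re_trace_le_trace_sqrt (matPow X (1/2) * matPow σ (3/4)))
    have e4 := re_trace_herFun_mul hXh (pf (1/2)) (matPow σ (3/4))
    rw [← matPow_eq hXh] at e4
    rw [e4]
  -- total u weight
  have hu1 : ∑ i, u i = 1 := by
    have e : Matrix.trace (Vᴴ * σ * V) = Matrix.trace σ := by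
      rw [Matrix.trace_mul_cycle, mul_star_self_unit hXh, Matrix.one_mul]
    simp only [hudef]
    calc ∑ i, ((Vᴴ * σ * V) i i).re = (Matrix.trace (Vᴴ * σ * V)).re := by
          rw [show Matrix.trace (Vᴴ * σ * V) = ∑ i, (Vᴴ * σ * V) i i from rfl, Complex.re_sum]
      _ = 1 := by rw [e, hσt, Complex.one_re]
  -- Jensen
  have hjen : ∀ i, ∀ p : ℝ, 1 ≤ p →
      s i ≤ (∑ j, w i j * (pf (1/2) (q j)) ^ p) ^ p⁻¹ := by
    intro i p hp
    have hjj := Real.inner_le_weight_mul_Lp_of_nonneg Finset.univ hp (w i)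
      (fun j => pf (1/2) (q j)) (hw0 i) (fun j => pf_nonneg (hq0 j) _)
    rw [hw1 i, Real.one_rpow, one_mul] at hjj
    calc s i = ∑ j, w i j * pf (1/2) (q j) := by
          rw [hsexp i]
          exact Finset.sum_congr rfl fun j _ => mul_comm _ _
      _ ≤ _ := hjj
  have hjt : ∀ i, s i ^ ((3:ℝ)/2) ≤ t i := by
    intro i
    have h1' := hjen i (3/2) (by norm_num)
    have e : ∑ j, w i j * (pf (1/2) (q j)) ^ ((3:ℝ)/2) = t i := by
      rw [htexp i]
      refine Finset.sum_congr rfl fun j _ => ?_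
      rw [pf_eq_rpow (hq0 j) (by norm_num : (1/2 : ℝ) ≠ 0),
        pf_eq_rpow (hq0 j) (by norm_num : (3/4 : ℝ) ≠ 0),
        ← Real.rpow_mul (hq0 j), show (1/2 : ℝ) * (3/2) = 3/4 by norm_num, mul_comm]
    rw [e] at h1'
    have h2' : s i ^ ((3:ℝ)/2) ≤ (t i ^ ((3/2 : ℝ))⁻¹) ^ ((3:ℝ)/2) :=
      Real.rpow_le_rpow (hs0 i) h1' (by norm_num)
    rwa [← Real.rpow_mul (ht0 i), show ((3/2 : ℝ))⁻¹ * (3/2) = 1 by norm_num,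
      Real.rpow_one] at h2'
  have hju : ∀ i, s i ^ (2:ℝ) ≤ u i := by
    intro i
    have hu0 : 0 ≤ u i := by
      rw [huexp i]
      exact Finset.sum_nonneg fun j _ => mul_nonneg (hq0 j) (hw0 i j)
    have h1' := hjen i 2 (by norm_num)
    have e : ∑ j, w i j * (pf (1/2) (q j)) ^ (2:ℝ) = u i := by
      rw [huexp i]
      refine Finset.sum_congr rfl fun j _ => ?_
      rw [pf_eq_rpow (hq0 j) (by norm_num : (1/2 : ℝ) ≠ 0), ← Real.rpow_mul (hq0 j),
        show (1/2 : ℝ) * 2 = 1 by norm_num, Real.rpow_one, mul_comm]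
    rw [e] at h1'
    have h2' : s i ^ (2:ℝ) ≤ (u i ^ ((2:ℝ))⁻¹) ^ (2:ℝ) :=
      Real.rpow_le_rpow (hs0 i) h1' (by norm_num)
    rwa [← Real.rpow_mul hu0, show ((2:ℝ))⁻¹ * 2 = 1 by norm_num, Real.rpow_one] at h2'
  have hconv2 : ∀ a : ℝ, a ^ (2:ℝ) = a ^ 2 := fun a => by
    rw [show (2:ℝ) = ((2:ℕ):ℝ) by norm_num, Real.rpow_natCast]
  have hQ0 : 0 ≤ Q2R ρ σ := by
    rw [hQ]; exact Finset.sum_nonneg fun i _ => sq_nonneg _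
  have hF0 : 0 ≤ fidelity ρ σ :=
    le_trans (Finset.sum_nonneg fun i _ =>
      mul_nonneg (pf_nonneg (hx0 i) _) (ht0 i)) hFexp
  -- (A) 1 ≤ Q2R
  have hQ1 : 1 ≤ Q2R ρ σ := by
    have hcs := Real.inner_le_Lp_mul_Lq_of_nonneg (f := x) (g := s) Finset.univ
      (⟨by norm_num, by norm_num, by norm_num⟩ : Real.HolderConjugate 2 2)
      (fun i _ => hx0 i) (fun i _ => hs0 i)
    rw [h1] at hcs
    have hsu : ∑ i, s i ^ (2:ℝ) ≤ 1 := by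
      rw [← hu1]
      exact Finset.sum_le_sum fun i _ => hju i
    have hs2nn : (0:ℝ) ≤ ∑ i, s i ^ (2:ℝ) :=
      Finset.sum_nonneg fun i _ => Real.rpow_nonneg (hs0 i) _
    have hb : (∑ i, s i ^ (2:ℝ)) ^ ((1:ℝ)/2) ≤ 1 :=
      Real.rpow_le_one hs2nn hsu (by norm_num)
    have hxnn : (0:ℝ) ≤ ∑ i, x i ^ (2:ℝ) :=
      Finset.sum_nonneg fun i _ => Real.rpow_nonneg (hx0 i) _
    have h2 : 1 ≤ (∑ i, x i ^ (2:ℝ)) ^ ((1:ℝ)/2) := by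
      calc (1:ℝ) ≤ (∑ i, x i ^ (2:ℝ)) ^ ((1:ℝ)/2) * (∑ i, s i ^ (2:ℝ)) ^ ((1:ℝ)/2) := hcs
        _ ≤ (∑ i, x i ^ (2:ℝ)) ^ ((1:ℝ)/2) * 1 :=
            mul_le_mul_of_nonneg_left hb (Real.rpow_nonneg hxnn _)
        _ = _ := mul_one _
    have h3 : (1:ℝ) ≤ ∑ i, x i ^ (2:ℝ) := by
      have hr := Real.rpow_le_rpow (by norm_num : (0:ℝ) ≤ 1) h2 (by norm_num : (0:ℝ) ≤ 2)
      rwa [Real.one_rpow, ← Real.rpow_mul hxnn, show ((1:ℝ)/2) * 2 = 1 by norm_num,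
        Real.rpow_one] at hr
    rw [hQ]
    calc (1:ℝ) ≤ ∑ i, x i ^ (2:ℝ) := h3
      _ = ∑ i, x i ^ 2 := Finset.sum_congr rfl fun i _ => hconv2 _
  -- (B) 1 ≤ F² Q
  have hFQ : 1 ≤ fidelity ρ σ ^ 2 * Q2R ρ σ := by
    have hsplit : ∑ i, x i * s i = ∑ i, (x i ^ ((2:ℝ)/3)) * (x i ^ ((1:ℝ)/3) * s i) := by
      refine Finset.sum_congr rfl fun i _ => ?_
      rw [← mul_assoc, ← Real.rpow_add' (hx0 i) (by norm_num : (2:ℝ)/3 + 1/3 ≠ 0),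
        show (2:ℝ)/3 + 1/3 = 1 by norm_num, Real.rpow_one]
    have hcs := Real.inner_le_Lp_mul_Lq_of_nonneg (f := fun i => x i ^ ((2:ℝ)/3))
      (g := fun i => x i ^ ((1:ℝ)/3) * s i) Finset.univ
      (⟨by norm_num, by norm_num, by norm_num⟩ : Real.HolderConjugate 3 (3/2))
      (fun i _ => Real.rpow_nonneg (hx0 i) _)
      (fun i _ => mul_nonneg (Real.rpow_nonneg (hx0 i) _) (hs0 i))
    rw [← hsplit, h1] at hcs
    have e1 : ∑ i, (x i ^ ((2:ℝ)/3)) ^ (3:ℝ) = Q2R ρ σ := by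
      rw [hQ]
      refine Finset.sum_congr rfl fun i _ => ?_
      rw [← Real.rpow_mul (hx0 i), show (2:ℝ)/3 * 3 = 2 by norm_num, hconv2]
    have e2 : ∑ i, (x i ^ ((1:ℝ)/3) * s i) ^ ((3:ℝ)/2) ≤ fidelity ρ σ := by
      refine le_trans (Finset.sum_le_sum (fun i _ => ?_)) hFexp
      rw [Real.mul_rpow (Real.rpow_nonneg (hx0 i) _) (hs0 i),
        ← Real.rpow_mul (hx0 i), show (1:ℝ)/3 * (3/2) = 1/2 by norm_num,
        pf_eq_rpow (hx0 i) (by norm_num : (1/2:ℝ) ≠ 0)]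
      exact mul_le_mul_of_nonneg_left (hjt i) (Real.rpow_nonneg (hx0 i) _)
    have hFg0 : (0:ℝ) ≤ ∑ i, (x i ^ ((1:ℝ)/3) * s i) ^ ((3:ℝ)/2) :=
      Finset.sum_nonneg fun i _ =>
        Real.rpow_nonneg (mul_nonneg (Real.rpow_nonneg (hx0 i) _) (hs0 i)) _
    rw [e1] at hcs
    have hmono : (∑ i, (x i ^ ((1:ℝ)/3) * s i) ^ ((3:ℝ)/2)) ^ (1/((3:ℝ)/2)) ≤
        fidelity ρ σ ^ (1/((3:ℝ)/2)) :=
      Real.rpow_le_rpow hFg0 e2 (by norm_num)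
    have hc2 : 1 ≤ (Q2R ρ σ) ^ (1/(3:ℝ)) * fidelity ρ σ ^ (1/((3:ℝ)/2)) :=
      le_trans hcs (mul_le_mul_of_nonneg_left hmono (Real.rpow_nonneg hQ0 _))
    have hcube := Real.rpow_le_rpow (by norm_num : (0:ℝ) ≤ 1) hc2 (by norm_num : (0:ℝ) ≤ 3)
    rw [Real.one_rpow, Real.mul_rpow (Real.rpow_nonneg hQ0 _) (Real.rpow_nonneg hF0 _),
      ← Real.rpow_mul hQ0, ← Real.rpow_mul hF0,
      show (1/(3:ℝ)) * 3 = 1 by norm_num, show (1/((3:ℝ)/2)) * 3 = 2 by norm_num,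
      Real.rpow_one, hconv2] at hcube
    rw [mul_comm] at hcube
    exact hcube
  exact ⟨hQ1, hF0, hFQ⟩
end PfAux

/-- For density matrices with `supp ρ ⊆ supp σ`, the purified distance satisfies
`P²(ρ,σ) ≤ 1 − 1/Q₂(ρ‖σ)`; equivalently, `D₂(ρ‖σ) ≥ −log(1 − P²(ρ,σ))`. -/
theorem purified_dist_le_of_Q2
    (ρ σ : Matrix d d ℂ) (hρ : IsDensity ρ) (hσ : IsDensity σ) (h : suppLE ρ σ) :
    ENNReal.ofReal (purifiedDist ρ σ ^ 2) ≤ 1 - 1 / Q2 ρ σ ∧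
      -(ENNReal.log (ENNReal.ofReal (1 - purifiedDist ρ σ ^ 2))) ≤ D2 ρ σ := by
  obtain ⟨hQ1, hF0, hFQ⟩ := PfAux.key_ineq hρ.1 hρ.2 hσ.1 hσ.2 h
  have hQpos : 0 < Q2R ρ σ := lt_of_lt_of_le one_pos hQ1
  have hF2pos : 0 < fidelity ρ σ ^ 2 := by
    rcases lt_or_eq_of_le (sq_nonneg (fidelity ρ σ)) with h2 | h2
    · exact h2
    · rw [← h2, zero_mul] at hFQ
      linarith
  have h1Q : 1 / Q2R ρ σ ≤ fidelity ρ σ ^ 2 := by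
    rw [div_le_iff₀ hQpos]
    exact hFQ
  have hQ2eq : Q2 ρ σ = ENNReal.ofReal (Q2R ρ σ) := if_pos h
  have hsub : (1 : ℝ≥0∞) - 1 / Q2 ρ σ = ENNReal.ofReal (1 - 1 / Q2R ρ σ) := by
    rw [hQ2eq, one_div, ← ENNReal.ofReal_inv_of_pos hQpos, ← ENNReal.ofReal_one,
      ← ENNReal.ofReal_sub _ (by positivity), one_div]
  have hD2 : D2 ρ σ = ENNReal.log (ENNReal.ofReal (Q2R ρ σ)) := by
    rw [show D2 ρ σ = ENNReal.log (Q2 ρ σ) from rfl, hQ2eq]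
  have hP : purifiedDist ρ σ = Real.sqrt (1 - fidelity ρ σ ^ 2) := rfl
  rcases le_or_gt 0 (1 - fidelity ρ σ ^ 2) with hcase | hcase
  · have hP2 : purifiedDist ρ σ ^ 2 = 1 - fidelity ρ σ ^ 2 := by
      rw [hP, Real.sq_sqrt hcase]
    constructor
    · rw [hP2, hsub]
      apply ENNReal.ofReal_le_ofReal
      linarith
    · have e1 : (1 : ℝ) - purifiedDist ρ σ ^ 2 = fidelity ρ σ ^ 2 := by
        rw [hP2]; ring
      rw [e1, hD2, ENNReal.log_ofReal_of_pos hF2pos, ENNReal.log_ofReal_of_pos hQpos,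
        ← EReal.coe_neg, EReal.coe_le_coe_iff]
      have hl : 0 ≤ Real.log (fidelity ρ σ ^ 2 * Q2R ρ σ) := Real.log_nonneg hFQ
      rw [Real.log_mul (ne_of_gt hF2pos) (ne_of_gt hQpos)] at hl
      linarith
  · have hP0 : purifiedDist ρ σ = 0 := by
      rw [hP]
      exact Real.sqrt_eq_zero'.mpr hcase.le
    have hP2 : purifiedDist ρ σ ^ 2 = 0 := by rw [hP0]; ring
    constructor
    · rw [hP2]
      simp
    · rw [hP2, sub_zero, ENNReal.ofReal_one, ENNReal.log_one, neg_zero, hD2]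
      exact ENNReal.zero_le_log_iff.mpr (ENNReal.one_le_ofReal.mpr hQ1)
end
end

section
/- Let ρ and σ be density matrices on a finite-dimensional complex Hilbert space A of dimension d, and let p, q ∈ ℝ^d be the vectors of eigenvalues of ρ and σ respectively, each arranged in non-increasing order. Then min over unitaries U on A of (1/2)·‖ρ − U σ U*‖₁ equals (1/2)·‖p − q‖₁. -/
open scoped Matrix Kronecker BigOperators ENNReal ComplexOrder Classical

noncomputable section

variable {d : Type*} [Fintype d] [DecidableEq d]

namespace AuxOrbit

open Matrix Polynomial Finset

variable {n : Type*} [Fintype n] [DecidableEq n]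

lemma mul_diag_conjT (M N : Matrix n n ℂ) (dg : n → ℂ) (a b : n) :
    (M * Matrix.diagonal dg * Nᴴ) a b = ∑ i, M a i * dg i * star (N b i) := by
  rw [Matrix.mul_apply]
  refine Finset.sum_congr rfl fun i _ => ?_
  rw [Matrix.mul_diagonal, Matrix.conjTranspose_apply]

lemma charpoly_unitary_conj (U A : Matrix n n ℂ) (hU : U ∈ Matrix.unitaryGroup n ℂ) :
    (U * A * star U).charpoly = A.charpoly := by
  have h2 : U * star U = 1 := (Unitary.mem_iff.mp hU).2
  have key : charmatrix (U * A * star U) =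
      U.map (Polynomial.C) * charmatrix A * (star U).map (Polynomial.C) := by
    unfold charmatrix
    rw [Matrix.mul_sub, Matrix.sub_mul]
    congr 1
    · rw [show (Matrix.scalar n (X : ℂ[X])) = (X : ℂ[X]) • (1 : Matrix n n ℂ[X]) by
        simp [Matrix.scalar, smul_eq_diagonal_mul]]
      rw [Matrix.mul_smul, Matrix.smul_mul, mul_one, ← Matrix.map_mul, h2, Matrix.map_one _ (map_zero _) (map_one _)]
    · simp only [RingHom.mapMatrix_apply]
      rw [← Matrix.map_mul, ← Matrix.map_mul]
  unfold Matrix.charpoly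
  have h1 : star U * U = 1 := (Unitary.mem_iff.mp hU).1
  rw [key, Matrix.det_mul, Matrix.det_mul, mul_comm, ← mul_assoc, ← Matrix.det_mul, ← Matrix.map_mul, h1,
    Matrix.map_one _ (map_zero _) (map_one _), Matrix.det_one, one_mul]

lemma charpoly_diag (dg : n → ℂ) :
    (Matrix.diagonal dg).charpoly = ((Finset.univ.val.map dg).map fun a => X - Polynomial.C a).prod := by
  unfold Matrix.charpoly
  have h : charmatrix (Matrix.diagonal dg) = Matrix.diagonal (fun i => (X : ℂ[X]) - Polynomial.C (dg i)) := by
    ext i j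
    by_cases h : i = j
    · subst h; simp
    · simp [charmatrix_apply_ne _ _ _ h, Matrix.diagonal_apply_ne _ h, Matrix.diagonal_apply_ne dg h]
  rw [h, Matrix.det_diagonal, Multiset.map_map, Finset.prod_eq_multiset_prod]
  rfl

lemma eig_multiset_eq_roots {A : Matrix n n ℂ} (hA : A.IsHermitian) :
    Finset.univ.val.map (fun i => (hA.eigenvalues i : ℂ)) = A.charpoly.roots := by
  conv_rhs => rw [hA.spectral_theorem]
  rw [Unitary.conjStarAlgAut_apply, charpoly_unitary_conj _ _ (hA.eigenvectorUnitary).2, charpoly_diag,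
    Polynomial.roots_multiset_prod_X_sub_C]
  rfl

lemma eig_multiset_eq {A B : Matrix n n ℂ} (hA : A.IsHermitian) (hB : B.IsHermitian)
    (h : A.charpoly = B.charpoly) :
    Finset.univ.val.map hA.eigenvalues = Finset.univ.val.map hB.eigenvalues := by
  have h1 := eig_multiset_eq_roots hA
  rw [h, ← eig_multiset_eq_roots hB] at h1
  refine Multiset.map_injective Complex.ofReal_injective ?_
  simpa [Multiset.map_map, Function.comp] using h1

lemma sum_transfer {f g : n → ℝ} (h : Finset.univ.val.map f = Finset.univ.val.map g) (φ : ℝ → ℝ) :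
    ∑ i, φ (f i) = ∑ i, φ (g i) := by
  have h2 := congrArg Multiset.sum (congrArg (Multiset.map φ) h)
  rw [Multiset.map_map, Multiset.map_map] at h2
  rw [Finset.sum_eq_multiset_sum, Finset.sum_eq_multiset_sum]
  exact h2

lemma map_comp_perm (f : n → ℝ) (e : Equiv.Perm n) :
    Finset.univ.val.map (fun i => f (e i)) = Finset.univ.val.map f := by
  have h1 : Finset.univ.val.map (fun i => f (e i)) = (Finset.univ.val.map e).map f := by
    rw [Multiset.map_map]; rfl
  have h2 : Finset.univ.val.map ⇑e = Finset.univ.val := by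
    have := Finset.map_univ_equiv e
    calc Finset.univ.val.map ⇑e = (Finset.univ.map e.toEmbedding).val := rfl
    _ = Finset.univ.val := by rw [this]
  rw [h1, h2]

end AuxOrbit
namespace AuxOrbit
open Matrix Polynomial Finset

variable {n : Type*} [Fintype n] [DecidableEq n]

lemma herFun_isHermitian {A : Matrix n n ℂ} (hA : A.IsHermitian) (f : ℝ → ℝ) :
    (herFun hA f).IsHermitian := by
  unfold herFun
  unfold Matrix.IsHermitian
  rw [Matrix.conjTranspose_mul, Matrix.conjTranspose_mul, Matrix.conjTranspose_conjTranspose,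
    Matrix.diagonal_conjTranspose]
  have : star (fun i => (f (hA.eigenvalues i) : ℂ)) = fun i => (f (hA.eigenvalues i) : ℂ) := by
    funext i; simp [Complex.conj_ofReal]
  rw [this, Matrix.mul_assoc]

lemma trace_herFun {A : Matrix n n ℂ} (hA : A.IsHermitian) (f : ℝ → ℝ) :
    (herFun hA f).trace = ∑ i, (f (hA.eigenvalues i) : ℂ) := by
  unfold herFun
  rw [Matrix.trace_mul_cycle, ← Matrix.star_eq_conjTranspose,
    (Unitary.mem_iff.mp (hA.eigenvectorUnitary).2).1, one_mul, Matrix.trace_diagonal]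

lemma herFun_posSemidef {A : Matrix n n ℂ} (hA : A.IsHermitian) {f : ℝ → ℝ}
    (hf : ∀ x, 0 ≤ f x) : (herFun hA f).PosSemidef := by
  unfold herFun
  have hd : (Matrix.diagonal (fun i => (f (hA.eigenvalues i) : ℂ))).PosSemidef := by
    rw [Matrix.posSemidef_diagonal_iff]
    intro i
    rw [Complex.zero_le_real]
    exact hf _
  exact hd.mul_mul_conjTranspose_same (hA.eigenvectorUnitary : Matrix n n ℂ)

lemma herFun_sub {A : Matrix n n ℂ} (hA : A.IsHermitian) (f g : ℝ → ℝ) :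
    herFun hA f - herFun hA g = herFun hA (fun x => f x - g x) := by
  unfold herFun
  rw [← Matrix.sub_mul, ← Matrix.mul_sub, Matrix.diagonal_sub]
  congr 1
  congr 1
  congr 1
  funext i
  push_cast
  ring

lemma herFun_id {A : Matrix n n ℂ} (hA : A.IsHermitian) :
    herFun hA (fun x => x) = A := by
  unfold herFun
  conv_rhs => rw [hA.spectral_theorem]
  rfl

lemma trace_hermitian {A : Matrix n n ℂ} (hA : A.IsHermitian) :
    A.trace = ∑ i, (hA.eigenvalues i : ℂ) := by
  conv_lhs => rw [← herFun_id hA]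
  exact trace_herFun hA _

/-- eigenvalue multiset of a unitary conjugate of a real diagonal matrix -/
lemma eig_multiset_conj_diag {B : Matrix n n ℂ} (hB : B.IsHermitian) (M : Matrix n n ℂ)
    (hM : M ∈ Matrix.unitaryGroup n ℂ) (r : n → ℝ)
    (h : B = M * Matrix.diagonal (fun i => (r i : ℂ)) * star M) :
    Finset.univ.val.map hB.eigenvalues = Finset.univ.val.map r := by
  have h1 := eig_multiset_eq_roots hB
  have h2 : B.charpoly = ((Finset.univ.val.map (fun i => (r i : ℂ))).map fun a => X - Polynomial.C a).prod := by
    rw [h, charpoly_unitary_conj _ _ hM, charpoly_diag]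
  rw [h2, Polynomial.roots_multiset_prod_X_sub_C] at h1
  refine Multiset.map_injective Complex.ofReal_injective ?_
  simpa [Multiset.map_map, Function.comp] using h1

end AuxOrbit
namespace AuxOrbit
open Matrix Polynomial Finset

variable {n : Type*} [Fintype n] [DecidableEq n]

lemma conj_mul_conj (M : Matrix n n ℂ) (hM : M ∈ Matrix.unitaryGroup n ℂ)
    (X Y : Matrix n n ℂ) :
    (M * X * star M) * (M * Y * star M) = M * (X * Y) * star M := by
  have h1 : star M * M = 1 := (Unitary.mem_iff.mp hM).1
  calc (M * X * star M) * (M * Y * star M)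
      = M * X * ((star M * M) * (Y * star M)) := by simp only [Matrix.mul_assoc]
    _ = M * (X * Y) * star M := by rw [h1, one_mul]; simp only [Matrix.mul_assoc]

lemma isHermitian_conj_diag (M : Matrix n n ℂ) (r : n → ℝ) :
    (M * Matrix.diagonal (fun i => (r i : ℂ)) * star M).IsHermitian := by
  unfold Matrix.IsHermitian
  rw [Matrix.star_eq_conjTranspose, Matrix.conjTranspose_mul, Matrix.conjTranspose_mul,
    Matrix.conjTranspose_conjTranspose, Matrix.diagonal_conjTranspose]
  have : star (fun i => (r i : ℂ)) = fun i => (r i : ℂ) := by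
    funext i; simp [Complex.conj_ofReal]
  rw [this, Matrix.mul_assoc]

lemma traceNorm_conj_diag (M : Matrix n n ℂ) (hM : M ∈ Matrix.unitaryGroup n ℂ) (r : n → ℝ) :
    traceNorm (M * Matrix.diagonal (fun i => (r i : ℂ)) * star M) = ∑ i, |r i| := by
  set C := M * Matrix.diagonal (fun i => (r i : ℂ)) * star M with hCdef
  have hC : C.IsHermitian := isHermitian_conj_diag M r
  have hCC : Cᴴ * C = M * Matrix.diagonal (fun i => ((r i ^ 2 : ℝ) : ℂ)) * star M := by
    rw [hC.eq, hCdef, conj_mul_conj M hM, Matrix.diagonal_mul_diagonal]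
    congr 1
    congr 1
    funext i
    push_cast
    ring
  have hCCh : (Cᴴ * C).IsHermitian := (Matrix.posSemidef_conjTranspose_mul_self C).1
  unfold traceNorm matPow matFun
  rw [dif_pos hCCh, trace_herFun]
  have hms := eig_multiset_conj_diag hCCh M hM (fun i => r i ^ 2) hCC
  have hsum := sum_transfer hms (fun x => if x = 0 then 0 else Real.rpow x (1/2))
  rw [← Complex.ofReal_sum, Complex.ofReal_re]
  rw [hsum]
  refine Finset.sum_congr rfl fun i _ => ?_
  by_cases h : r i = 0
  · simp [h]
  · rw [if_neg (pow_ne_zero 2 h)]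
    rw [show Real.rpow (r i ^ 2) (1/2) = (r i ^ 2) ^ (1/2 : ℝ) from rfl]
    rw [← Real.sqrt_eq_rpow, Real.sqrt_sq_eq_abs]

lemma traceNorm_hermitian {C : Matrix n n ℂ} (hC : C.IsHermitian) :
    traceNorm C = ∑ i, |hC.eigenvalues i| := by
  have h : C = (hC.eigenvectorUnitary : Matrix n n ℂ) *
      Matrix.diagonal (fun i => ((hC.eigenvalues i : ℝ) : ℂ)) *
      star (hC.eigenvectorUnitary : Matrix n n ℂ) := hC.spectral_theorem
  rw [show traceNorm C = traceNorm ((hC.eigenvectorUnitary : Matrix n n ℂ) *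
      Matrix.diagonal (fun i => ((hC.eigenvalues i : ℝ) : ℂ)) *
      star (hC.eigenvectorUnitary : Matrix n n ℂ)) from by rw [← h]]
  exact traceNorm_conj_diag _ (hC.eigenvectorUnitary).2 _

end AuxOrbit
namespace AuxOrbit
open Matrix Polynomial Finset

lemma inner_toEuclideanLin {m : ℕ} (M : Matrix (Fin m) (Fin m) ℂ)
    (x : EuclideanSpace ℂ (Fin m)) :
    (inner ℂ x (Matrix.toEuclideanLin M x) : ℂ)
      = dotProduct (star (x : Fin m → ℂ)) (M *ᵥ (x : Fin m → ℂ)) := by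
  rw [EuclideanSpace.inner_eq_star_dotProduct, dotProduct_comm]; rfl

lemma eigen_apply {m : ℕ} {M : Matrix (Fin m) (Fin m) ℂ} (hM : M.IsHermitian) (i : Fin m) :
    Matrix.toEuclideanLin M (hM.eigenvectorBasis i)
      = (hM.eigenvalues i : ℂ) • hM.eigenvectorBasis i := by
  apply PiLp.ext
  intro j
  have := congrFun (hM.mulVec_eigenvectorBasis i) j
  simpa [Matrix.toEuclideanLin_apply, Complex.real_smul] using this

lemma rayleigh_eq {m : ℕ} {M : Matrix (Fin m) (Fin m) ℂ} (hM : M.IsHermitian)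
    (x : EuclideanSpace ℂ (Fin m)) :
    (inner ℂ x (Matrix.toEuclideanLin M x) : ℂ).re
      = ∑ i, hM.eigenvalues i * ‖hM.eigenvectorBasis.repr x i‖^2 := by
  set v := hM.eigenvectorBasis with hv
  have hTx : Matrix.toEuclideanLin M x
      = ∑ i, (v.repr x i * (hM.eigenvalues i : ℂ)) • v i := by
    conv_lhs => rw [← v.sum_repr x]
    rw [map_sum]
    refine Finset.sum_congr rfl fun i _ => ?_
    rw [_root_.map_smul, eigen_apply hM i, smul_smul]
  rw [hTx, inner_sum]
  rw [Complex.re_sum]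
  refine Finset.sum_congr rfl fun i _ => ?_
  rw [inner_smul_right]
  have hxi : (inner ℂ x (v i) : ℂ) = starRingEnd ℂ (v.repr x i) := by
    rw [v.repr_apply_apply, inner_conj_symm]
  rw [hxi]
  have : v.repr x i * (hM.eigenvalues i : ℂ) * starRingEnd ℂ (v.repr x i)
      = (hM.eigenvalues i : ℂ) * (v.repr x i * starRingEnd ℂ (v.repr x i)) := by ring
  rw [this, Complex.mul_conj, ← Complex.ofReal_mul, Complex.ofReal_re]
  simp [← Complex.sq_norm]

lemma repr_zero_of_span {m : ℕ} (v : OrthonormalBasis (Fin m) ℂ (EuclideanSpace ℂ (Fin m)))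
    (s : Set (Fin m)) {x : EuclideanSpace ℂ (Fin m)}
    (hx : x ∈ Submodule.span ℂ (v '' s)) {i : Fin m} (hi : i ∉ s) :
    v.repr x i = 0 := by
  rw [v.repr_apply_apply]
  induction hx using Submodule.span_induction with
  | mem y hy =>
    obtain ⟨j, hj, rfl⟩ := hy
    exact v.orthonormal.2 (fun h : i = j => hi (h ▸ hj))
  | zero => exact inner_zero_right _
  | add y z _ _ hy hz => rw [inner_add_right, hy, hz, add_zero]
  | smul c y _ hy => rw [inner_smul_right, hy, mul_zero]

lemma parseval {m : ℕ} (v : OrthonormalBasis (Fin m) ℂ (EuclideanSpace ℂ (Fin m)))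
    (x : EuclideanSpace ℂ (Fin m)) :
    ∑ i, ‖v.repr x i‖^2 = ‖x‖^2 := by
  have h1 : ‖x‖ = ‖v.repr x‖ := (v.repr.norm_map x).symm
  rw [h1, EuclideanSpace.norm_eq, Real.sq_sqrt (by positivity)]

lemma rayleigh_ge {m : ℕ} {M : Matrix (Fin m) (Fin m) ℂ} (hM : M.IsHermitian)
    (s : Set (Fin m)) (c : ℝ) (hc : ∀ i ∈ s, c ≤ hM.eigenvalues i)
    {x : EuclideanSpace ℂ (Fin m)}
    (hx : x ∈ Submodule.span ℂ (hM.eigenvectorBasis '' s)) :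
    c * ‖x‖^2 ≤ (inner ℂ x (Matrix.toEuclideanLin M x) : ℂ).re := by
  rw [rayleigh_eq hM x, ← parseval hM.eigenvectorBasis x, Finset.mul_sum]
  refine Finset.sum_le_sum fun i _ => ?_
  by_cases hi : i ∈ s
  · exact mul_le_mul_of_nonneg_right (hc i hi) (by positivity)
  · rw [repr_zero_of_span _ s hx hi]
    simp

lemma rayleigh_le {m : ℕ} {M : Matrix (Fin m) (Fin m) ℂ} (hM : M.IsHermitian)
    (s : Set (Fin m)) (c : ℝ) (hc : ∀ i ∈ s, hM.eigenvalues i ≤ c)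
    {x : EuclideanSpace ℂ (Fin m)}
    (hx : x ∈ Submodule.span ℂ (hM.eigenvectorBasis '' s)) :
    (inner ℂ x (Matrix.toEuclideanLin M x) : ℂ).re ≤ c * ‖x‖^2 := by
  rw [rayleigh_eq hM x, ← parseval hM.eigenvectorBasis x, Finset.mul_sum]
  refine Finset.sum_le_sum fun i _ => ?_
  by_cases hi : i ∈ s
  · exact mul_le_mul_of_nonneg_right (hc i hi) (by positivity)
  · rw [repr_zero_of_span _ s hx hi]
    simp

end AuxOrbit
namespace AuxOrbit
open Matrix Polynomial Finset

lemma span_img_finrank {m : ℕ} (v : OrthonormalBasis (Fin m) ℂ (EuclideanSpace ℂ (Fin m)))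
    (s : Set (Fin m)) :
    Module.finrank ℂ ↥(Submodule.span ℂ (v '' s)) = Nat.card s := by
  have hon : Orthonormal ℂ (fun i : s => v i) := v.orthonormal.comp _ Subtype.val_injective
  rw [Set.image_eq_range]
  exact (finrank_span_eq_card hon.linearIndependent).trans Nat.card_eq_fintype_card.symm

lemma weyl_mono {m : ℕ} {A B : Matrix (Fin m) (Fin m) ℂ} (hA : A.IsHermitian) (hB : B.IsHermitian)
    (hAB : (B - A).PosSemidef) (p q : Fin m → ℝ) (hpa : Antitone p) (hqa : Antitone q)
    (e f : Equiv.Perm (Fin m)) (hpe : ∀ i, p i = hA.eigenvalues (e i))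
    (hqe : ∀ i, q i = hB.eigenvalues (f i)) (k : Fin m) : p k ≤ q k := by
  classical
  set vA := hA.eigenvectorBasis with hvA
  set vB := hB.eigenvectorBasis with hvB
  set sA : Set (Fin m) := ⇑e '' (Set.Iic k) with hsA
  set sB : Set (Fin m) := ⇑f '' (Set.Ici k) with hsB
  set S := Submodule.span ℂ (⇑vA '' sA) with hS
  set T := Submodule.span ℂ (⇑vB '' sB) with hT
  have hSfr : Module.finrank ℂ ↥S = (k : ℕ) + 1 := by
    rw [hS, span_img_finrank, hsA,
      Nat.card_congr (Equiv.Set.image ⇑e _ e.injective).symm, Nat.card_eq_fintype_card,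
      Fintype.card_ofFinset, Fin.card_Iic]
    intro x; simp
  have hTfr : Module.finrank ℂ ↥T = m - (k : ℕ) := by
    rw [hT, span_img_finrank, hsB,
      Nat.card_congr (Equiv.Set.image ⇑f _ f.injective).symm, Nat.card_eq_fintype_card,
      Fintype.card_ofFinset, Fin.card_Ici]
    intro x; simp
  have hsum := Submodule.finrank_sup_add_finrank_inf_eq S T
  have hle : Module.finrank ℂ ↥(S ⊔ T) ≤ m := by
    have h := Submodule.finrank_le (S ⊔ T)
    simpa using h
  have hkm : (k : ℕ) < m := k.isLt
  have hpos : 0 < Module.finrank ℂ ↥(S ⊓ T) := by omega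
  have hne : S ⊓ T ≠ ⊥ := by
    intro h
    rw [h, finrank_bot] at hpos
    exact lt_irrefl 0 hpos
  obtain ⟨x, hxmem, hxne⟩ := Submodule.exists_mem_ne_zero_of_ne_bot hne
  have hxS : x ∈ S := (Submodule.mem_inf.mp hxmem).1
  have hxT : x ∈ T := (Submodule.mem_inf.mp hxmem).2
  have h1 : p k * ‖x‖^2 ≤ (inner ℂ x (Matrix.toEuclideanLin A x) : ℂ).re := by
    refine rayleigh_ge hA sA (p k) ?_ hxS
    rintro i ⟨j, hj, rfl⟩
    rw [← hpe j]
    exact hpa hj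
  have h2 : (inner ℂ x (Matrix.toEuclideanLin B x) : ℂ).re ≤ q k * ‖x‖^2 := by
    refine rayleigh_le hB sB (q k) ?_ hxT
    rintro i ⟨j, hj, rfl⟩
    rw [← hqe j]
    exact hqa hj
  have h3 : (inner ℂ x (Matrix.toEuclideanLin A x) : ℂ).re
      ≤ (inner ℂ x (Matrix.toEuclideanLin B x) : ℂ).re := by
    have h0 := hAB.dotProduct_mulVec_nonneg (x : Fin m → ℂ)
    rw [Matrix.sub_mulVec, dotProduct_sub] at h0
    have h0' := (Complex.le_def.mp h0).1
    rw [inner_toEuclideanLin, inner_toEuclideanLin]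
    simp only [Complex.sub_re, Complex.zero_re] at h0'
    linarith
  have hx2 : 0 < ‖x‖^2 := by
    have : 0 < ‖x‖ := norm_pos_iff.mpr hxne
    positivity
  have hfin : p k * ‖x‖^2 ≤ q k * ‖x‖^2 := le_trans h1 (le_trans h3 h2)
  exact (mul_le_mul_iff_of_pos_right hx2).mp hfin

end AuxOrbit
namespace AuxOrbit
open Matrix Polynomial Finset

lemma antitone_unique {m : ℕ} {p q : Fin m → ℝ} (hp : Antitone p) (hq : Antitone q)
    (h : Finset.univ.val.map p = Finset.univ.val.map q) : p = q := by
  have huniv : (Finset.univ.val : Multiset (Fin m)) = (List.finRange m : Multiset (Fin m)) := rfl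
  have hl : ((List.ofFn p : List ℝ) : Multiset ℝ) = ((List.ofFn q : List ℝ) : Multiset ℝ) := by
    rw [List.ofFn_eq_map, List.ofFn_eq_map]
    rw [huniv] at h
    simpa [Multiset.map_coe] using h
  have hperm : (List.ofFn p).Perm (List.ofFn q) := Multiset.coe_eq_coe.mp hl
  have hs1 : (List.ofFn p).Pairwise (· ≥ ·) := by
    rw [List.pairwise_ofFn]
    intro i j hij
    exact hp hij.le
  have hs2 : (List.ofFn q).Pairwise (· ≥ ·) := by
    rw [List.pairwise_ofFn]
    intro i j hij
    exact hq hij.le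
  have := List.Perm.eq_of_pairwise' hs1 hs2 hperm
  exact funext fun i => by
    have h1 := List.ofFn_injective this
    exact congrFun h1 i

lemma exists_antitone_sort {m : ℕ} (g : Fin m → ℝ) :
    ∃ (r : Fin m → ℝ) (e : Equiv.Perm (Fin m)), Antitone r ∧ ∀ i, r i = g (e i) := by
  refine ⟨fun i => g (Tuple.sort g (Fin.revPerm i)),
    (Fin.revPerm : Equiv.Perm (Fin m)).trans (Tuple.sort g), ?_, fun i => rfl⟩
  intro i j hij
  exact Tuple.monotone_sort g (by simpa [Fin.rev_le_rev] using hij)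

lemma abs_eq_add_two_neg (x : ℝ) : |x| = x + 2 * max (-x) 0 := by
  rcases le_total 0 x with h | h
  · rw [abs_of_nonneg h, max_eq_right (by linarith)]
    ring
  · rw [abs_of_nonpos h, max_eq_left (by linarith)]
    ring

lemma mirsky {m : ℕ} {A B : Matrix (Fin m) (Fin m) ℂ} (hA : A.IsHermitian) (hB : B.IsHermitian)
    (p q : Fin m → ℝ) (hpa : Antitone p) (hqa : Antitone q)
    (e f : Equiv.Perm (Fin m)) (hpe : ∀ i, p i = hA.eigenvalues (e i))
    (hqe : ∀ i, q i = hB.eigenvalues (f i)) :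
    ∑ i, |p i - q i| ≤ traceNorm (A - B) := by
  have hC : (A - B).IsHermitian := hA.sub hB
  set Cm := herFun hC (fun x => max (-x) 0) with hCmdef
  set Cp := herFun hC (fun x => max x 0) with hCpdef
  have hCmH : Cm.IsHermitian := herFun_isHermitian hC _
  have hCmP : Cm.PosSemidef := herFun_posSemidef hC (fun x => le_max_right _ _)
  have hCpP : Cp.PosSemidef := herFun_posSemidef hC (fun x => le_max_right _ _)
  have hsub : Cp - Cm = A - B := by
    rw [hCpdef, hCmdef, herFun_sub]
    have hfun : (fun x : ℝ => max x 0 - max (-x) 0) = fun x : ℝ => x := by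
      funext x
      rcases le_total 0 x with h | h
      · rw [max_eq_left h, max_eq_right (by linarith)]; ring
      · rw [max_eq_right h, max_eq_left (by linarith)]; ring
    rw [hfun, herFun_id]
  set A' := A + Cm with hA'def
  have hA'H : A'.IsHermitian := hA.add hCmH
  have h1 : (A' - A).PosSemidef := by
    have : A' - A = Cm := by rw [hA'def]; abel
    rw [this]; exact hCmP
  have h2 : (A' - B).PosSemidef := by
    have : A' - B = Cp := by
      rw [hA'def, show Cp = (Cp - Cm) + Cm from by abel, hsub]
      abel
    rw [this]; exact hCpP
  obtain ⟨r, g, hra, hrg⟩ := exists_antitone_sort hA'H.eigenvalues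
  have hw1 : ∀ k, p k ≤ r k := fun k => weyl_mono hA hA'H h1 p r hpa hra e g hpe hrg k
  have hw2 : ∀ k, q k ≤ r k := fun k => weyl_mono hB hA'H h2 q r hqa hra f g hqe hrg k
  -- sums via permutations
  have hsp : ∑ i, p i = ∑ i, hA.eigenvalues i := by
    rw [show (∑ i, p i) = ∑ i, hA.eigenvalues (e i) from Finset.sum_congr rfl fun i _ => hpe i]
    exact Equiv.sum_comp e _
  have hsq : ∑ i, q i = ∑ i, hB.eigenvalues i := by
    rw [show (∑ i, q i) = ∑ i, hB.eigenvalues (f i) from Finset.sum_congr rfl fun i _ => hqe i]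
    exact Equiv.sum_comp f _
  have hsr : ∑ i, r i = ∑ i, hA'H.eigenvalues i := by
    rw [show (∑ i, r i) = ∑ i, hA'H.eigenvalues (g i) from Finset.sum_congr rfl fun i _ => hrg i]
    exact Equiv.sum_comp g _
  -- trace identities
  have htr1 : ∑ i, hA'H.eigenvalues i
      = (∑ i, hA.eigenvalues i) + ∑ i, max (-(hC.eigenvalues i)) 0 := by
    have t4 : A'.trace = A.trace + Cm.trace := by rw [hA'def, Matrix.trace_add]
    have : ((∑ i, hA'H.eigenvalues i : ℝ) : ℂ)
        = ((∑ i, hA.eigenvalues i : ℝ) : ℂ) + ((∑ i, max (-(hC.eigenvalues i)) 0 : ℝ) : ℂ) := by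
      push_cast
      rw [← trace_hermitian hA'H, ← trace_hermitian hA,
        ← trace_herFun hC (fun x => max (-x) 0), t4]
    exact_mod_cast this
  have htr2 : (∑ i, hA.eigenvalues i) - (∑ i, hB.eigenvalues i) = ∑ i, hC.eigenvalues i := by
    have t5 : (A - B).trace = A.trace - B.trace := by rw [Matrix.trace_sub]
    have : ((∑ i, hA.eigenvalues i : ℝ) : ℂ) - ((∑ i, hB.eigenvalues i : ℝ) : ℂ)
        = ((∑ i, hC.eigenvalues i : ℝ) : ℂ) := by
      push_cast
      rw [← trace_hermitian hA, ← trace_hermitian hB, ← trace_hermitian hC, t5]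
    exact_mod_cast this
  have hbound : ∑ i, |p i - q i| ≤ 2 * (∑ i, r i) - (∑ i, p i) - (∑ i, q i) := by
    have hle : ∀ i ∈ Finset.univ, |p i - q i| ≤ (r i - p i) + (r i - q i) := by
      intro i _
      have := hw1 i
      have := hw2 i
      rw [abs_sub_le_iff]
      constructor <;> linarith
    calc ∑ i, |p i - q i| ≤ ∑ i, ((r i - p i) + (r i - q i)) := Finset.sum_le_sum hle
      _ = 2 * (∑ i, r i) - (∑ i, p i) - (∑ i, q i) := by
          rw [Finset.sum_add_distrib, Finset.sum_sub_distrib, Finset.sum_sub_distrib]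
          ring
  have hfinal : 2 * (∑ i, r i) - (∑ i, p i) - (∑ i, q i) = ∑ i, |hC.eigenvalues i| := by
    rw [hsp, hsq, hsr, htr1]
    have : ∑ i, |hC.eigenvalues i|
        = ∑ i, (hC.eigenvalues i + 2 * max (-(hC.eigenvalues i)) 0) :=
      Finset.sum_congr rfl fun i _ => abs_eq_add_two_neg _
    rw [this, Finset.sum_add_distrib]
    rw [← htr2]
    rw [← Finset.mul_sum]
    ring
  rw [traceNorm_hermitian hC]
  rw [hfinal] at hbound
  exact hbound

end AuxOrbit
namespace AuxOrbit
open Matrix Polynomial Finset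

lemma unitary_diag_of_perm {m : ℕ} {A : Matrix (Fin m) (Fin m) ℂ} (hA : A.IsHermitian)
    (p : Fin m → ℝ) (e : Equiv.Perm (Fin m)) (he : ∀ i, p i = hA.eigenvalues (e i)) :
    ∃ M ∈ Matrix.unitaryGroup (Fin m) ℂ,
      A = M * Matrix.diagonal (fun i => (p i : ℂ)) * star M := by
  set V := (hA.eigenvectorUnitary : Matrix (Fin m) (Fin m) ℂ) with hV
  set M := V.submatrix id ⇑e with hM
  have hVmem := hA.eigenvectorUnitary.2
  have hVV : star V * V = 1 := (Unitary.mem_iff.mp hVmem).1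
  have hMmem : M ∈ Matrix.unitaryGroup (Fin m) ℂ := by
    rw [Matrix.mem_unitaryGroup_iff']
    ext i j
    rw [Matrix.mul_apply]
    have hterm : ∀ k, (star M) i k * M k j = (star V) (e i) k * V k (e j) := by
      intro k
      rw [Matrix.star_apply, Matrix.star_apply]
      rfl
    rw [Finset.sum_congr rfl fun k _ => hterm k, ← Matrix.mul_apply, hVV]
    simp [Matrix.one_apply, EmbeddingLike.apply_eq_iff_eq]
  refine ⟨M, hMmem, ?_⟩
  have hspec : A = V * Matrix.diagonal (fun i => (hA.eigenvalues i : ℂ)) * Vᴴ :=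
    hA.spectral_theorem
  ext a b
  rw [Matrix.star_eq_conjTranspose, mul_diag_conjT]
  have hterm : ∀ i, M a i * (p i : ℂ) * star (M b i)
      = V a (e i) * ((hA.eigenvalues (e i) : ℝ) : ℂ) * star (V b (e i)) := by
    intro i
    rw [he i]
    rfl
  rw [Finset.sum_congr rfl fun i _ => hterm i]
  rw [Equiv.sum_comp e (fun j => V a j * ((hA.eigenvalues j : ℝ) : ℂ) * star (V b j))]
  have hab := congrArg (fun X : Matrix (Fin m) (Fin m) ℂ => X a b) hspec
  rw [hab, mul_diag_conjT]

end AuxOrbit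

/-- **Lemma (optimal unitary orbit distance)**: the minimal trace distance between `ρ` and the
unitary orbit of `σ` equals half the `ℓ₁` distance between their sorted eigenvalue vectors. -/
theorem min_unitary_traceDist_eq (dd : ℕ)
    (ρ σ : Matrix (Fin dd) (Fin dd) ℂ) (hρ : IsDensity ρ) (hσ : IsDensity σ)
    (p q : Fin dd → ℝ) (hpa : Antitone p) (hqa : Antitone q)
    (hp : ∃ e : Equiv.Perm (Fin dd), ∀ i, p i = hρ.1.1.eigenvalues (e i))
    (hq : ∃ e : Equiv.Perm (Fin dd), ∀ i, q i = hσ.1.1.eigenvalues (e i)) :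
    sInf {x : ℝ | ∃ U : Matrix.unitaryGroup (Fin dd) ℂ,
        x = (1/2) * traceNorm (ρ - (U : Matrix (Fin dd) (Fin dd) ℂ) * σ
              * star (U : Matrix (Fin dd) (Fin dd) ℂ))}
      = (1/2) * ∑ i, |p i - q i| := by
  obtain ⟨e, hpe⟩ := hp
  obtain ⟨f, hqe⟩ := hq
  obtain ⟨M, hMmem, hMeq⟩ := AuxOrbit.unitary_diag_of_perm hρ.1.1 p e hpe
  obtain ⟨N, hNmem, hNeq⟩ := AuxOrbit.unitary_diag_of_perm hσ.1.1 q f hqe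
  have hNN : star N * N = 1 := (Unitary.mem_iff.mp hNmem).1
  set S : Set ℝ := {x : ℝ | ∃ U : Matrix.unitaryGroup (Fin dd) ℂ,
      x = (1/2) * traceNorm (ρ - (U : Matrix (Fin dd) (Fin dd) ℂ) * σ
            * star (U : Matrix (Fin dd) (Fin dd) ℂ))} with hSdef
  -- lower bound: every element of S is ≥ (1/2) ∑ |p i - q i|
  have hlb : ∀ x ∈ S, (1/2) * ∑ i, |p i - q i| ≤ x := by
    rintro x ⟨U, rfl⟩
    set B := (U : Matrix (Fin dd) (Fin dd) ℂ) * σ * star (U : Matrix (Fin dd) (Fin dd) ℂ) with hBdef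
    have hBeq : B = ((U : Matrix (Fin dd) (Fin dd) ℂ) * N) *
        Matrix.diagonal (fun i => (q i : ℂ)) * star ((U : Matrix (Fin dd) (Fin dd) ℂ) * N) := by
      rw [hBdef, hNeq, star_mul]
      simp only [Matrix.mul_assoc]
    have hB : B.IsHermitian := by
      rw [hBeq]; exact AuxOrbit.isHermitian_conj_diag _ q
    have hUN : (U : Matrix (Fin dd) (Fin dd) ℂ) * N ∈ Matrix.unitaryGroup (Fin dd) ℂ :=
      mul_mem U.2 hNmem
    have hmsB : Finset.univ.val.map hB.eigenvalues = Finset.univ.val.map q :=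
      AuxOrbit.eig_multiset_conj_diag hB _ hUN q hBeq
    obtain ⟨r, g, hra, hrg⟩ := AuxOrbit.exists_antitone_sort hB.eigenvalues
    have hmsr : Finset.univ.val.map r = Finset.univ.val.map q := by
      have hreq : r = fun i => hB.eigenvalues (g i) := funext hrg
      rw [hreq, AuxOrbit.map_comp_perm, hmsB]
    have hrq : r = q := AuxOrbit.antitone_unique hra hqa hmsr
    have hqg : ∀ i, q i = hB.eigenvalues (g i) := fun i => by rw [← hrq]; exact hrg i
    have hmir := AuxOrbit.mirsky hρ.1.1 hB p q hpa hqa e g hpe hqg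
    linarith
  -- the value is attained at U₀ = M * star N
  have hU0mem : M * star N ∈ Matrix.unitaryGroup (Fin dd) ℂ :=
    mul_mem hMmem (Unitary.star_mem hNmem)
  set U0 : Matrix.unitaryGroup (Fin dd) ℂ := ⟨M * star N, hU0mem⟩ with hU0def
  have hval : ρ - (U0 : Matrix (Fin dd) (Fin dd) ℂ) * σ * star (U0 : Matrix (Fin dd) (Fin dd) ℂ)
      = M * Matrix.diagonal (fun i => ((p i - q i : ℝ) : ℂ)) * star M := by
    have hcan : ∀ X : Matrix (Fin dd) (Fin dd) ℂ, star N * (N * X) = X := by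
      intro X
      rw [← Matrix.mul_assoc, hNN, one_mul]
    have hU0c : (U0 : Matrix (Fin dd) (Fin dd) ℂ) = M * star N := rfl
    rw [hU0c, hNeq, star_mul, star_star]
    have hdg : Matrix.diagonal (fun i => ((p i - q i : ℝ) : ℂ))
        = Matrix.diagonal (fun i => (p i : ℂ)) - Matrix.diagonal (fun i => (q i : ℂ)) := by
      rw [Matrix.diagonal_sub]
      congr 1
      funext i
      push_cast
      ring
    rw [hdg, Matrix.mul_sub, Matrix.sub_mul]
    rw [← hMeq]
    congr 1
    simp only [Matrix.mul_assoc]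
    rw [hcan, hcan]
  have hvalx : (1/2) * traceNorm (ρ - (U0 : Matrix (Fin dd) (Fin dd) ℂ) * σ
      * star (U0 : Matrix (Fin dd) (Fin dd) ℂ)) = (1/2) * ∑ i, |p i - q i| := by
    rw [hval, AuxOrbit.traceNorm_conj_diag M hMmem (fun i => p i - q i)]
  have hmem : (1/2) * ∑ i, |p i - q i| ∈ S := ⟨U0, hvalx.symm⟩
  exact le_antisymm (csInf_le ⟨_, hlb⟩ hmem) (le_csInf ⟨_, hmem⟩ hlb)
end
end

section
/- Let ρ be a density matrix on a bipartite system A⊗B. Then I_max(A:B)_ρ ≤ −log λ_min(ρ^A) − H_min(A|B)_ρ, where ρ^A = Tr_B ρ and λ_min(ρ^A) denotes the smallest nonzero eigenvalue of ρ^A. -/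
open scoped Matrix Kronecker BigOperators ENNReal ComplexOrder Classical

noncomputable section

variable {d : Type*} [Fintype d] [DecidableEq d]

/-- Max relative entropy `D_max(ρ‖σ) = log inf{t ≥ 0 : ρ ≤ t·σ}` (`+∞` if no such `t`). -/
def Dmax (ρ σ : Matrix d d ℂ) : EReal :=
  ENNReal.log (sInf {t : ℝ≥0∞ | t ≠ ∞ ∧ (t.toReal • σ - ρ).PosSemidef})

/-- The smallest nonzero eigenvalue of a matrix. -/
def lambdaMinPos (M : Matrix d d ℂ) : ℝ :=
  sInf {x : ℝ | x ≠ 0 ∧ (x : ℂ) ∈ spectrum ℂ M}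

section helpersD
set_option linter.unusedSectionVars false
variable {M : Matrix d d ℂ} (hM : M.IsHermitian)

lemma eigU_conjT_mul : (hM.eigenvectorUnitary : Matrix d d ℂ)ᴴ * (hM.eigenvectorUnitary : Matrix d d ℂ) = 1 := by
  rw [← Matrix.star_eq_conjTranspose]
  exact Matrix.mem_unitaryGroup_iff'.mp hM.eigenvectorUnitary.2

lemma eigU_mul_conjT : (hM.eigenvectorUnitary : Matrix d d ℂ) * (hM.eigenvectorUnitary : Matrix d d ℂ)ᴴ = 1 := by
  rw [← Matrix.star_eq_conjTranspose]
  exact Matrix.mem_unitaryGroup_iff.mp hM.eigenvectorUnitary.2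

lemma herFun_isHermitian (f : ℝ → ℝ) : (herFun hM f).IsHermitian := by
  apply Matrix.isHermitian_mul_mul_conjTranspose
  exact Matrix.isHermitian_diagonal_of_self_adjoint _ (funext fun i => Complex.conj_ofReal _)

lemma herFun_mul (f g : ℝ → ℝ) :
    herFun hM f * herFun hM g = herFun hM (fun x => f x * g x) := by
  unfold herFun
  have h : ∀ X : Matrix d d ℂ,
      (hM.eigenvectorUnitary : Matrix d d ℂ)ᴴ * ((hM.eigenvectorUnitary : Matrix d d ℂ) * X) = X :=
    fun X => by rw [← Matrix.mul_assoc, eigU_conjT_mul hM, Matrix.one_mul]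
  simp only [Matrix.mul_assoc]
  rw [h, ← Matrix.mul_assoc (Matrix.diagonal _), Matrix.diagonal_mul_diagonal]
  congr 2
  ext i
  push_cast
  rfl

lemma herFun_posSemidef {f : ℝ → ℝ} (h : ∀ i, 0 ≤ f (hM.eigenvalues i)) :
    (herFun hM f).PosSemidef := by
  apply Matrix.PosSemidef.mul_mul_conjTranspose_same
  refine Matrix.PosSemidef.diagonal ?_
  intro i
  simp only [Pi.zero_apply]
  exact_mod_cast h i

lemma herFun_id : herFun hM (fun x => x) = M := by
  conv_rhs => rw [hM.spectral_theorem]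
  rfl

lemma herFun_sub (f g : ℝ → ℝ) :
    herFun hM f - herFun hM g = herFun hM (fun x => f x - g x) := by
  unfold herFun
  rw [← Matrix.sub_mul, ← Matrix.mul_sub, Matrix.diagonal_sub]
  push_cast
  rfl

lemma herFun_smul (c : ℝ) (f : ℝ → ℝ) :
    c • herFun hM f = herFun hM (fun x => c * f x) := by
  unfold herFun
  have hd : (Matrix.diagonal fun i => ((c * f (hM.eigenvalues i) : ℝ) : ℂ)) =
      c • Matrix.diagonal fun i => ((f (hM.eigenvalues i) : ℝ) : ℂ) := by
    ext i j
    by_cases h : i = j <;>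
      simp [Matrix.diagonal_apply, h, Complex.real_smul, Complex.ofReal_mul]
  rw [hd, Matrix.mul_smul, Matrix.smul_mul]

lemma spectrum_eq_range (hM : M.IsHermitian) :
    spectrum ℂ M = Set.range (fun i => (hM.eigenvalues i : ℂ)) := by
  conv_lhs => rw [hM.spectral_theorem]
  let u : (Matrix d d ℂ)ˣ :=
    ⟨hM.eigenvectorUnitary, (hM.eigenvectorUnitary : Matrix d d ℂ)ᴴ,
      eigU_mul_conjT hM, eigU_conjT_mul hM⟩
  have hc : spectrum ℂ ((u : Matrix d d ℂ) * Matrix.diagonal (RCLike.ofReal ∘ hM.eigenvalues) * ((u⁻¹ : (Matrix d d ℂ)ˣ) : Matrix d d ℂ)) = spectrum ℂ (Matrix.diagonal (RCLike.ofReal ∘ hM.eigenvalues)) :=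
    spectrum.units_conjugate
  rw [Unitary.conjStarAlgAut_apply, show (star (hM.eigenvectorUnitary : Matrix d d ℂ)) = ((u⁻¹ : (Matrix d d ℂ)ˣ) : Matrix d d ℂ) from rfl, hc,
    spectrum_diagonal]
  rfl

end helpersD

section helpersD2
set_option linter.unusedSectionVars false
variable {M : Matrix d d ℂ}

lemma lambdaMinPos_facts (hM : M.PosSemidef) (htr : M.trace = 1) :
    0 < lambdaMinPos M ∧
      ∀ i, hM.1.eigenvalues i ≠ 0 → lambdaMinPos M ≤ hM.1.eigenvalues i := by
  have hspec : ∀ x : ℝ, ((x : ℂ) ∈ spectrum ℂ M ↔ ∃ i, hM.1.eigenvalues i = x) := by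
    intro x
    rw [spectrum_eq_range hM.1]
    constructor
    · rintro ⟨i, hi⟩
      exact ⟨i, by simpa using hi⟩
    · rintro ⟨i, hi⟩
      exact ⟨i, by simp [hi]⟩
  have hfin : {x : ℝ | x ≠ 0 ∧ (x : ℂ) ∈ spectrum ℂ M}.Finite :=
    (Set.finite_range hM.1.eigenvalues).subset
      (fun x hx => (hspec x).mp hx.2 |>.imp fun i h => h)
  have hex : ∃ i, hM.1.eigenvalues i ≠ 0 := by
    by_contra hc
    push_neg at hc
    have hM0 : M = 0 := by
      rw [← herFun_id hM.1]
      unfold herFun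
      have hd : (Matrix.diagonal fun i => ((hM.1.eigenvalues i : ℝ) : ℂ)) = 0 := by
        ext i j
        by_cases h : i = j <;> simp [Matrix.diagonal_apply, h, hc]
      rw [hd, Matrix.mul_zero, Matrix.zero_mul]
    rw [hM0] at htr
    simp at htr
  have hne : {x : ℝ | x ≠ 0 ∧ (x : ℂ) ∈ spectrum ℂ M}.Nonempty := by
    obtain ⟨i, hi⟩ := hex
    exact ⟨hM.1.eigenvalues i, hi, (hspec _).mpr ⟨i, rfl⟩⟩
  have hmem : lambdaMinPos M ∈ {x : ℝ | x ≠ 0 ∧ (x : ℂ) ∈ spectrum ℂ M} :=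
    hne.csInf_mem hfin
  constructor
  · obtain ⟨hne0, hsp⟩ := hmem
    obtain ⟨i, hi⟩ := (hspec _).mp hsp
    have : 0 ≤ lambdaMinPos M := hi ▸ hM.eigenvalues_nonneg i
    exact lt_of_le_of_ne this (Ne.symm hne0)
  · intro i hi
    exact csInf_le hfin.bddBelow ⟨hi, (hspec _).mpr ⟨i, rfl⟩⟩

lemma PosSemidef.smul_real (hM : M.PosSemidef) {c : ℝ} (hc : 0 ≤ c) :
    (c • M).PosSemidef := by
  rw [Matrix.posSemidef_iff_dotProduct_mulVec]
  constructor
  · apply Matrix.IsHermitian.ext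
    intro i j
    simp only [Matrix.smul_apply, star_smul, star_trivial]
    rw [hM.1.apply i j]
  · intro x
    rw [Matrix.smul_mulVec, dotProduct_smul]
    have h0 := hM.dotProduct_mulVec_nonneg x
    have : (c : ℝ) • (dotProduct (star x) (M *ᵥ x)) =
        (c : ℂ) * (dotProduct (star x) (M *ᵥ x)) := by rw [Complex.real_smul]
    rw [this]
    exact mul_nonneg (by exact_mod_cast hc) h0

lemma trace_conjT_mul_self_eq_zero {m : Type*} [Fintype m]
    {X : Matrix m d ℂ} (h : Matrix.trace (Xᴴ * X) = 0) : X = 0 := by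
  have hre : ∑ j, ∑ i, Complex.normSq (X i j) = 0 := by
    have h2 := congrArg Complex.re h
    simpa [Matrix.trace, Matrix.diag, Matrix.mul_apply, Matrix.conjTranspose_apply,
      Complex.normSq_eq_conj_mul_self, Complex.re_sum, Complex.normSq_apply] using h2
  ext i j
  have h1 : ∀ j' ∈ Finset.univ, (0:ℝ) ≤ ∑ i, Complex.normSq (X i j') :=
    fun j' _ => Finset.sum_nonneg fun i _ => Complex.normSq_nonneg _
  have h2 := (Finset.sum_eq_zero_iff_of_nonneg h1).mp hre j (Finset.mem_univ j)
  have h3 := (Finset.sum_eq_zero_iff_of_nonneg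
    (fun i' _ => Complex.normSq_nonneg (X i' j))).mp h2 i (Finset.mem_univ i)
  simpa using Complex.normSq_eq_zero.mp h3


lemma herFun_smul' {M : Matrix d d ℂ} (hM : M.IsHermitian) (c : ℝ) (f : ℝ → ℝ) :
    herFun hM (fun x => c * f x) = c • herFun hM f := (herFun_smul hM c f).symm

/-- Existence of the support projection with the properties we need. -/
lemma support_proj_exists {M : Matrix d d ℂ} (hM : M.PosSemidef) (htr : M.trace = 1) :
    ∃ P : Matrix d d ℂ, P.IsHermitian ∧ P * P = P ∧ M * P = M ∧
      (M - lambdaMinPos M • P).PosSemidef ∧ 0 < lambdaMinPos M := by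
  obtain ⟨hlpos, hlle⟩ := lambdaMinPos_facts hM htr
  refine ⟨herFun hM.1 (fun x => if x = 0 then 0 else 1),
    herFun_isHermitian _ _, ?_, ?_, ?_, hlpos⟩
  · have e2 : (fun x : ℝ => (if x = 0 then 0 else 1) * (if x = 0 then 0 else 1)) =
        fun x : ℝ => if x = 0 then (0:ℝ) else 1 := by
      funext x
      by_cases hx : x = 0 <;> simp [hx]
    rw [herFun_mul, e2]
  · have e := herFun_mul hM.1 (fun x => x) (fun x => if x = 0 then 0 else 1)
    have e2 : (fun x : ℝ => x * (if x = 0 then 0 else 1)) = fun x : ℝ => x := by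
      funext x
      by_cases hx : x = 0 <;> simp [hx]
    rw [e2, herFun_id] at e
    exact e
  · have e4 := herFun_sub hM.1 (fun x => x)
      (fun x => lambdaMinPos M * (if x = 0 then 0 else 1))
    rw [herFun_id, herFun_smul' hM.1 (lambdaMinPos M) (fun x => if x = 0 then 0 else 1)] at e4
    rw [e4]
    apply herFun_posSemidef
    intro i
    by_cases hi : hM.1.eigenvalues i = 0
    · simp [hi]
    · have := hlle i hi
      simp only [hi, if_false, mul_one]
      linarith


end helpersD2

section helpersKron
set_option linter.unusedSectionVars false
variable {m n p q : Type*} [Fintype m] [Fintype n] [Fintype p] [Fintype q]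

lemma kron_conjTranspose (X : Matrix m n ℂ) (Y : Matrix p q ℂ) :
    (X ⊗ₖ Y)ᴴ = Xᴴ ⊗ₖ Yᴴ := by
  ext ⟨i, j⟩ ⟨k, l⟩
  simp [Matrix.conjTranspose_apply, Matrix.kroneckerMap_apply, star_mul', mul_comm]

lemma PosSemidef.kron [DecidableEq m] [DecidableEq p] {X : Matrix m m ℂ} {Y : Matrix p p ℂ}
    (hX : X.PosSemidef) (hY : Y.PosSemidef) : (X ⊗ₖ Y).PosSemidef := by
  open scoped MatrixOrder in obtain ⟨C, rfl⟩ : ∃ C, X = Cᴴ * C :=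
    CStarAlgebra.nonneg_iff_eq_star_mul_self.mp hX.nonneg
  open scoped MatrixOrder in obtain ⟨D, rfl⟩ : ∃ D, Y = Dᴴ * D :=
    CStarAlgebra.nonneg_iff_eq_star_mul_self.mp hY.nonneg
  rw [Matrix.mul_kronecker_mul, ← kron_conjTranspose]
  exact Matrix.posSemidef_conjTranspose_mul_self _

end helpersKron

variable {A B : Type*} [Fintype A] [DecidableEq A] [Fintype B] [DecidableEq B]

/-- Partial trace over the second tensor factor. -/
def ptrace2 (ρ : Matrix (A × B) (A × B) ℂ) : Matrix A A ℂ :=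
  Matrix.of fun i j => ∑ b : B, ρ (i, b) (j, b)

section helpersAB
set_option linter.unusedSectionVars false
variable {ρ : Matrix (A × B) (A × B) ℂ}

lemma psd_sum {ι : Type*} (s : Finset ι) (f : ι → Matrix A A ℂ)
    (h : ∀ i ∈ s, (f i).PosSemidef) : (∑ i ∈ s, f i).PosSemidef := by
  classical
  induction s using Finset.induction_on with
  | empty => simpa using Matrix.PosSemidef.zero
  | insert a s hnotmem ih =>
    rw [Finset.sum_insert hnotmem]
    exact ((h _ (Finset.mem_insert_self _ _)).add
      (ih fun i hi => h i (Finset.mem_insert_of_mem hi)))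

/-- The embedding matrix `E b : Matrix A (A×B)` with `(E b) i (j, b') = δ_{ij} δ_{b b'}`. -/
private def Emb (b : B) : Matrix A (A × B) ℂ :=
  Matrix.of fun i p => if p = (i, b) then 1 else 0

lemma ptrace2_eq_sum_emb (ρ : Matrix (A × B) (A × B) ℂ) :
    ptrace2 ρ = ∑ b : B, Emb (A := A) b * ρ * (Emb (A := A) b)ᴴ := by
  ext i j
  rw [Matrix.sum_apply]
  show (∑ b : B, ρ (i, b) (j, b)) = _
  refine Finset.sum_congr rfl fun b _ => ?_
  simp [Emb, Matrix.mul_apply, Matrix.conjTranspose_apply, apply_ite (star : ℂ → ℂ),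
    Fintype.sum_prod_type, Prod.ext_iff, ite_and, Finset.sum_ite_eq, Finset.sum_ite_eq']

lemma ptrace2_posSemidef (hρ : ρ.PosSemidef) : (ptrace2 ρ).PosSemidef := by
  rw [ptrace2_eq_sum_emb]
  exact psd_sum _ _ fun b _ => hρ.mul_mul_conjTranspose_same (Emb b)

lemma trace_ptrace2 (ρ : Matrix (A × B) (A × B) ℂ) :
    (ptrace2 ρ).trace = ρ.trace := by
  simp [Matrix.trace, Matrix.diag, ptrace2, Fintype.sum_prod_type]

lemma trace_mul_kron_one (ρ : Matrix (A × B) (A × B) ℂ) (N : Matrix A A ℂ) :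
    (ρ * (N ⊗ₖ (1 : Matrix B B ℂ))).trace = (ptrace2 ρ * N).trace := by
  simp only [Matrix.trace, Matrix.diag, Matrix.mul_apply, ptrace2, Matrix.kroneckerMap_apply,
    Matrix.one_apply, Fintype.sum_prod_type, Matrix.of_apply, Finset.sum_mul, mul_ite,
    mul_one, mul_zero]
  simp only [Finset.sum_ite_eq', Finset.mem_univ, if_true]
  refine Finset.sum_congr rfl fun i _ => ?_
  exact Finset.sum_comm

end helpersAB

/-- Max mutual information `I_max(A:B)_ρ = min_σ D_max(ρ ‖ ρ^A ⊗ σ)`. -/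
def Imax (ρ : Matrix (A × B) (A × B) ℂ) : EReal :=
  ⨅ σ : {σ : Matrix B B ℂ // IsDensity σ}, Dmax ρ (ptrace2 ρ ⊗ₖ σ.1)

/-- Optimized conditional min-entropy `H_min(A|B)_ρ = −min_σ D_max(ρ ‖ I_A ⊗ σ)`. -/
def Hmin (ρ : Matrix (A × B) (A × B) ℂ) : EReal :=
  -(⨅ σ : {σ : Matrix B B ℂ // IsDensity σ}, Dmax ρ ((1 : Matrix A A ℂ) ⊗ₖ σ.1))

section mainProof
set_option linter.unusedSectionVars false
set_option maxHeartbeats 1000000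

lemma sub_kron (X Y : Matrix A A ℂ) (Z : Matrix B B ℂ) :
    (X - Y) ⊗ₖ Z = X ⊗ₖ Z - Y ⊗ₖ Z := by
  ext ⟨i, j⟩ ⟨k, l⟩
  simp [Matrix.kroneckerMap_apply, Matrix.sub_apply, sub_mul]

lemma key_psd {ρ : Matrix (A × B) (A × B) ℂ} (hρ : IsDensity ρ) {σ : Matrix B B ℂ}
    (hσ : σ.PosSemidef) {t : ℝ} (ht : 0 ≤ t)
    (hX : (t • ((1 : Matrix A A ℂ) ⊗ₖ σ) - ρ).PosSemidef) :
    (((lambdaMinPos (ptrace2 ρ))⁻¹ * t) • (ptrace2 ρ ⊗ₖ σ) - ρ).PosSemidef := by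
  have hρA : (ptrace2 ρ).PosSemidef := ptrace2_posSemidef hρ.1
  have htrA : (ptrace2 ρ).trace = 1 := (trace_ptrace2 ρ).trans hρ.2
  obtain ⟨P, hPH, hPP, hAP, hf4, hlpos⟩ := support_proj_exists hρA htrA
  set l := lambdaMinPos (ptrace2 ρ) with hl
  set N : Matrix A A ℂ := 1 - P with hN
  have hNH : N.IsHermitian := Matrix.isHermitian_one.sub hPH
  set Q : Matrix (A × B) (A × B) ℂ := N ⊗ₖ (1 : Matrix B B ℂ) with hQ
  have hQH : Q.IsHermitian := by
    rw [Matrix.IsHermitian, hQ, kron_conjTranspose, hNH.eq, Matrix.conjTranspose_one]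
  have hNN : N * N = N := by
    rw [hN]
    simp only [Matrix.sub_mul, Matrix.mul_sub, Matrix.mul_one, Matrix.one_mul, hPP]
    abel
  have hQQ : Q * Q = Q := by
    rw [hQ, ← Matrix.mul_kronecker_mul, hNN, Matrix.one_mul]
  have hAN : ptrace2 ρ * N = 0 := by
    rw [hN, Matrix.mul_sub, Matrix.mul_one, hAP, sub_self]
  open scoped MatrixOrder in obtain ⟨S, hS⟩ : ∃ S, ρ = Sᴴ * S :=
    CStarAlgebra.nonneg_iff_eq_star_mul_self.mp hρ.1.nonneg
  have htr0 : Matrix.trace ((S * Q)ᴴ * (S * Q)) = 0 := by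
    have e1 : (S * Q)ᴴ * (S * Q) = Q * (ρ * Q) := by
      rw [Matrix.conjTranspose_mul, hQH.eq, hS]
      noncomm_ring
    rw [e1, Matrix.trace_mul_comm, Matrix.mul_assoc, hQQ, trace_mul_kron_one, hAN]
    simp
  have hSQ : S * Q = 0 := trace_conjT_mul_self_eq_zero htr0
  have hρQ : ρ * Q = 0 := by
    rw [hS, Matrix.mul_assoc, hSQ, Matrix.mul_zero]
  have hQρ : Q * ρ = 0 := by
    have h2 := congrArg Matrix.conjTranspose hρQ
    simpa [Matrix.conjTranspose_mul, hQH.eq, hρ.1.1.eq] using h2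
  set Pk : Matrix (A × B) (A × B) ℂ := P ⊗ₖ (1 : Matrix B B ℂ) with hPk
  have hPkH : Pk.IsHermitian := by
    rw [Matrix.IsHermitian, hPk, kron_conjTranspose, hPH.eq, Matrix.conjTranspose_one]
  have hPkQ : Pk = 1 - Q := by
    rw [hPk, hQ, hN, sub_kron, ← Matrix.one_kronecker_one (α := ℂ) (m := A) (n := B)]
    abel
  have hPρP : Pk * ρ * Pk = ρ := by
    rw [hPkQ, Matrix.sub_mul, Matrix.one_mul, hQρ, sub_zero, Matrix.mul_sub, Matrix.mul_one,
      hρQ, sub_zero]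
  have hY : (t • (P ⊗ₖ σ) - ρ).PosSemidef := by
    have h2 := hX.mul_mul_conjTranspose_same Pk
    rw [hPkH.eq] at h2
    have e2 : Pk * (t • ((1 : Matrix A A ℂ) ⊗ₖ σ) - ρ) * Pk = t • (P ⊗ₖ σ) - ρ := by
      rw [Matrix.mul_sub, Matrix.sub_mul, Matrix.mul_smul, Matrix.smul_mul, hPρP]
      congr 2
      rw [hPk, ← Matrix.mul_kronecker_mul, ← Matrix.mul_kronecker_mul]
      simp only [Matrix.mul_one, Matrix.one_mul, hPP]
    rwa [e2] at h2
  have hZ : ((l⁻¹ * t) • ((ptrace2 ρ - l • P) ⊗ₖ σ)).PosSemidef :=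
    PosSemidef.smul_real (PosSemidef.kron hf4 hσ)
      (mul_nonneg (inv_nonneg.mpr hlpos.le) ht)
  have hEq : (l⁻¹ * t) • (ptrace2 ρ ⊗ₖ σ) - ρ =
      (l⁻¹ * t) • ((ptrace2 ρ - l • P) ⊗ₖ σ) + (t • (P ⊗ₖ σ) - ρ) := by
    rw [sub_kron, Matrix.smul_kronecker, smul_sub, smul_smul]
    have e3 : l⁻¹ * t * l = t := by
      field_simp
    rw [e3]
    abel
  rw [hEq]
  exact hZ.add hY

lemma Dmax_kron_le {ρ : Matrix (A × B) (A × B) ℂ} (hρ : IsDensity ρ) {σ : Matrix B B ℂ}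
    (hσ : IsDensity σ) :
    Dmax ρ (ptrace2 ρ ⊗ₖ σ) ≤
      ((-Real.log (lambdaMinPos (ptrace2 ρ)) : ℝ) : EReal) +
        Dmax ρ ((1 : Matrix A A ℂ) ⊗ₖ σ) := by
  have hlpos : 0 < lambdaMinPos (ptrace2 ρ) :=
    (lambdaMinPos_facts (ptrace2_posSemidef hρ.1) ((trace_ptrace2 ρ).trans hρ.2)).1
  set l := lambdaMinPos (ptrace2 ρ) with hl
  set c : ℝ≥0∞ := ENNReal.ofReal l⁻¹ with hc
  have hc0 : c ≠ 0 := by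
    simp [hc, ENNReal.ofReal_eq_zero, not_le, inv_pos, hlpos]
  have hctop : c ≠ ⊤ := ENNReal.ofReal_ne_top
  set S1 := {t : ℝ≥0∞ | t ≠ ⊤ ∧ (t.toReal • ((1 : Matrix A A ℂ) ⊗ₖ σ) - ρ).PosSemidef} with hS1
  set S2 := {t : ℝ≥0∞ | t ≠ ⊤ ∧ (t.toReal • (ptrace2 ρ ⊗ₖ σ) - ρ).PosSemidef} with hS2
  have hmemmul : ∀ t ∈ S1, c * t ∈ S2 := by
    rintro t ⟨ht, hpsd⟩
    refine ⟨ENNReal.mul_ne_top hctop ht, ?_⟩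
    have htoReal : (c * t).toReal = l⁻¹ * t.toReal := by
      rw [ENNReal.toReal_mul, hc, ENNReal.toReal_ofReal (inv_nonneg.mpr hlpos.le)]
    rw [htoReal]
    exact key_psd hρ hσ.1 ENNReal.toReal_nonneg hpsd
  have hkey : sInf S2 ≤ c * sInf S1 := by
    rcases S1.eq_empty_or_nonempty with h1 | h1
    · rw [h1, sInf_empty, ENNReal.mul_top hc0]
      exact le_top
    · have hne : Nonempty S1 := h1.to_subtype
      conv_rhs => rw [sInf_eq_iInf']
      rw [ENNReal.mul_iInf_of_ne hc0 hctop]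
      exact le_iInf fun t => sInf_le (hmemmul t.1 t.2)
  calc Dmax ρ (ptrace2 ρ ⊗ₖ σ) = ENNReal.log (sInf S2) := rfl
    _ ≤ ENNReal.log (c * sInf S1) := ENNReal.log_monotone hkey
    _ = ENNReal.log c + ENNReal.log (sInf S1) := ENNReal.log_mul_add
    _ = ((-Real.log l : ℝ) : EReal) + Dmax ρ ((1 : Matrix A A ℂ) ⊗ₖ σ) := by
        rw [hc, ENNReal.log_ofReal_of_pos (inv_pos.mpr hlpos), Real.log_inv]
        rfl

end mainProof

/-- **Lemma**: `I_max(A:B)_ρ ≤ −log λ_min(ρ^A) − H_min(A|B)_ρ`, where `λ_min(ρ^A)` is the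
smallest nonzero eigenvalue of the reduced state. -/
theorem Imax_le_neg_log_lambdaMin_sub_Hmin
    (ρ : Matrix (A × B) (A × B) ℂ) (hρ : IsDensity ρ) :
    Imax ρ ≤ ((-Real.log (lambdaMinPos (ptrace2 ρ)) : ℝ) : EReal) - Hmin ρ := by
  set G := ⨅ σ : {σ : Matrix B B ℂ // IsDensity σ}, Dmax ρ ((1 : Matrix A A ℂ) ⊗ₖ σ.1) with hG
  set c : EReal := ((-Real.log (lambdaMinPos (ptrace2 ρ)) : ℝ) : EReal) with hc
  have hcb : c ≠ ⊥ := EReal.coe_ne_bot _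
  have hct : c ≠ ⊤ := EReal.coe_ne_top _
  have hcore : ∀ σ : {σ : Matrix B B ℂ // IsDensity σ},
      Imax ρ ≤ c + Dmax ρ ((1 : Matrix A A ℂ) ⊗ₖ σ.1) :=
    fun σ => le_trans (iInf_le _ σ) (Dmax_kron_le hρ σ.2)
  have h2 : ∀ σ : {σ : Matrix B B ℂ // IsDensity σ},
      Imax ρ - c ≤ Dmax ρ ((1 : Matrix A A ℂ) ⊗ₖ σ.1) := by
    intro σ
    rw [EReal.sub_le_iff_le_add (Or.inl hcb) (Or.inl hct), add_comm]
    exact hcore σ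
  have h3 : Imax ρ - c ≤ G := le_iInf h2
  have h4 : Imax ρ ≤ G + c :=
    (EReal.sub_le_iff_le_add (Or.inl hcb) (Or.inl hct)).mp h3
  have h5 : ((-Real.log (lambdaMinPos (ptrace2 ρ)) : ℝ) : EReal) - Hmin ρ = c + G := by
    rw [Hmin, ← hG, ← hc, sub_eq_add_neg, neg_neg]
  rw [h5, add_comm]
  exact h4
end
end

section
/- Let α ∈ (0,1), δ ∈ (0,1/2), and let ω be a density matrix on a finite-dimensional Hilbert space A. Then there exists an operator Λ on A with 0 ≤ Λ ≤ I_A, commuting with ω, such that Tr[Λ ω Λ] ≥ 1 − 2δ and −log λ_min(Λ ω Λ) ≤ H_α^δ(ω) + (1/(1−α))·log(1/δ), where λ_min denotes the smallest nonzero eigenvalue and H_α^δ(ω) := min{ H_α(τ) : τ a density matrix with (1/2)‖ω − τ‖₁ ≤ δ }. -/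
open scoped Matrix Kronecker BigOperators ENNReal ComplexOrder Classical

noncomputable section

variable {d : Type*} [Fintype d] [DecidableEq d]

variable {A B : Type*} [Fintype A] [DecidableEq A] [Fintype B] [DecidableEq B]

/-- Smoothed max mutual information
`I_max^ε(A:B)_ρ = min { I_max(A:B)_ρ' : (1/2)‖ρ − ρ'‖₁ ≤ ε }`. -/
def ImaxSmooth (ε : ℝ) (ρ : Matrix (A × B) (A × B) ℂ) : EReal :=
  ⨅ ρ' : {ρ' : Matrix (A × B) (A × B) ℂ //
      IsDensity ρ' ∧ (1/2) * traceNorm (ρ - ρ') ≤ ε}, Imax ρ'.1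

/-- Rényi entropy of order `α`: `H_α(τ) = (1/(1−α))·log Tr[τ^α]`. -/
def renyiEntropy (α : ℝ) (τ : Matrix d d ℂ) : ℝ :=
  (1 / (1 - α)) * Real.log ((matPow τ α).trace.re)

/-- Smoothed Rényi entropy `H_α^δ(ω) = min { H_α(τ) : (1/2)‖ω − τ‖₁ ≤ δ }`. -/
def renyiSmooth (α δ : ℝ) (ω : Matrix d d ℂ) : ℝ :=
  sInf {y : ℝ | ∃ τ : Matrix d d ℂ,
    IsDensity τ ∧ (1/2) * traceNorm (ω - τ) ≤ δ ∧ y = renyiEntropy α τ}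

namespace EffectAux

open Matrix Complex

variable {d : Type*} [Fintype d] [DecidableEq d]




section herFun

variable {M : Matrix d d ℂ} (hM : M.IsHermitian)

lemma star_coe_eigenvectorUnitary :
    (star hM.eigenvectorUnitary : Matrix d d ℂ) = (hM.eigenvectorUnitary : Matrix d d ℂ)ᴴ := by
  rw [← Matrix.star_eq_conjTranspose]

lemma coe_star_mul_self :
    (hM.eigenvectorUnitary : Matrix d d ℂ)ᴴ * (hM.eigenvectorUnitary : Matrix d d ℂ) = 1 := by
  rw [← star_coe_eigenvectorUnitary]
  exact Unitary.coe_star_mul_self hM.eigenvectorUnitary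

lemma coe_mul_star_self :
    (hM.eigenvectorUnitary : Matrix d d ℂ) * (hM.eigenvectorUnitary : Matrix d d ℂ)ᴴ = 1 := by
  rw [← star_coe_eigenvectorUnitary]
  exact Unitary.coe_mul_star_self hM.eigenvectorUnitary

lemma herFun_mul (f g : ℝ → ℝ) :
    herFun hM f * herFun hM g = herFun hM (fun x => f x * g x) := by
  unfold herFun
  have hcancel : ∀ X : Matrix d d ℂ, (hM.eigenvectorUnitary : Matrix d d ℂ)ᴴ *
      ((hM.eigenvectorUnitary : Matrix d d ℂ) * X) = X := fun X => by
    rw [← Matrix.mul_assoc, coe_star_mul_self, Matrix.one_mul]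
  simp only [Matrix.mul_assoc]
  rw [hcancel, ← Matrix.mul_assoc (Matrix.diagonal _), Matrix.diagonal_mul_diagonal]
  congr 1
  congr 1
  ext i
  simp

lemma herFun_trace (f : ℝ → ℝ) :
    (herFun hM f).trace = ∑ i, (f (hM.eigenvalues i) : ℂ) := by
  unfold herFun
  rw [Matrix.trace_mul_cycle, coe_star_mul_self, Matrix.one_mul, Matrix.trace_diagonal]

lemma herFun_trace_re (f : ℝ → ℝ) :
    (herFun hM f).trace.re = ∑ i, f (hM.eigenvalues i) := by
  rw [herFun_trace]
  push_cast [Complex.re_sum]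
  rfl

lemma herFun_posSemidef {f : ℝ → ℝ} (hf : ∀ i, 0 ≤ f (hM.eigenvalues i)) :
    (herFun hM f).PosSemidef := by
  unfold herFun
  rw [← star_coe_eigenvectorUnitary]
  exact (Matrix.posSemidef_diagonal_iff.mpr fun i => by
    exact Complex.zero_le_real.mpr (hf i)).mul_mul_conjTranspose_same _

lemma herFun_one : herFun hM (fun _ => 1) = 1 := by
  unfold herFun
  simp [Matrix.diagonal_one, coe_mul_star_self hM]

lemma herFun_id : herFun hM (fun x => x) = M := by
  unfold herFun
  rw [← star_coe_eigenvectorUnitary]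
  exact hM.spectral_theorem.symm

lemma herFun_sub (f g : ℝ → ℝ) :
    herFun hM (fun x => f x - g x) = herFun hM f - herFun hM g := by
  unfold herFun
  rw [← Matrix.sub_mul, ← Matrix.mul_sub, Matrix.diagonal_sub]
  push_cast
  rfl

lemma herFun_add (f g : ℝ → ℝ) :
    herFun hM (fun x => f x + g x) = herFun hM f + herFun hM g := by
  unfold herFun
  rw [← Matrix.add_mul, ← Matrix.mul_add, Matrix.diagonal_add]
  push_cast
  rfl

lemma herFun_const (c : ℝ) : herFun hM (fun _ => c) = (c : ℂ) • 1 := by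
  unfold herFun
  have h1 : (fun _ : d => (c : ℂ)) = (c : ℂ) • (fun _ => (1:ℂ)) := by funext _; simp
  rw [h1, Matrix.diagonal_smul, Matrix.diagonal_one]
  rw [Matrix.mul_smul, Matrix.mul_one, Matrix.smul_mul, coe_mul_star_self hM]

lemma herFun_isHermitian (f : ℝ → ℝ) : (herFun hM f).IsHermitian := by
  unfold herFun
  unfold Matrix.IsHermitian
  rw [Matrix.conjTranspose_mul, Matrix.conjTranspose_mul, Matrix.conjTranspose_conjTranspose,
    Matrix.diagonal_conjTranspose, Matrix.mul_assoc]
  congr 1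
  ext i
  simp [Complex.conj_ofReal]

end herFun





lemma trace_re_nonneg {P : Matrix d d ℂ} (hP : P.PosSemidef) : 0 ≤ P.trace.re := by
  have h : ∀ i, 0 ≤ (P i i).re := by
    intro i
    exact (Complex.le_def.mp (hP.diag_nonneg (i := i))).1
  rw [Matrix.trace, Complex.re_sum]
  exact Finset.sum_nonneg fun i _ => h i

open scoped MatrixOrder in
lemma trace_mul_re_nonneg {P Q : Matrix d d ℂ} (hP : P.PosSemidef) (hQ : Q.PosSemidef) :
    0 ≤ (P * Q).trace.re := by
  have hs := Matrix.nonneg_iff_posSemidef.mp (CFC.sqrt_nonneg Q)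
  have h1 : P * Q = P * CFC.sqrt Q * CFC.sqrt Q := by
    rw [Matrix.mul_assoc, CFC.sqrt_mul_sqrt_self Q hQ.nonneg]
  have h2 : (P * CFC.sqrt Q * CFC.sqrt Q).trace = (CFC.sqrt Q * P * CFC.sqrt Q).trace := by
    rw [Matrix.trace_mul_cycle]
  have h3 : (CFC.sqrt Q * P * CFC.sqrt Q).PosSemidef := by
    have := hP.mul_mul_conjTranspose_same (CFC.sqrt Q)
    rwa [hs.1.eq] at this
  rw [h1, h2]
  exact trace_re_nonneg h3

lemma trace_mul_re_mono {S X Y : Matrix d d ℂ} (hS : S.PosSemidef)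
    (hXY : (Y - X).PosSemidef) : (S * X).trace.re ≤ (S * Y).trace.re := by
  have h := trace_mul_re_nonneg hS hXY
  rw [Matrix.mul_sub, Matrix.trace_sub] at h
  have : ((S * Y).trace - (S * X).trace).re = (S * Y).trace.re - (S * X).trace.re := by
    simp [Complex.sub_re]
  rw [this] at h
  linarith

lemma herFun_congr {M : Matrix d d ℂ} (hM : M.IsHermitian) {f g : ℝ → ℝ}
    (h : ∀ i, f (hM.eigenvalues i) = g (hM.eigenvalues i)) : herFun hM f = herFun hM g := by
  unfold herFun
  have e : (fun i => (f (hM.eigenvalues i) : ℂ)) = (fun i => (g (hM.eigenvalues i) : ℂ)) :=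
    funext fun i => by rw [h i]
  rw [e]

open scoped MatrixOrder in
/-- Trace norm of a Hermitian matrix is the sum of the absolute values of eigenvalues. -/
lemma traceNorm_hermitian {X : Matrix d d ℂ} (hX : X.IsHermitian) :
    traceNorm X = ∑ i, |hX.eigenvalues i| := by
  have hY : (Xᴴ * X).PosSemidef := Matrix.posSemidef_conjTranspose_mul_self X
  have hW : (herFun hX (fun x => |x|)).PosSemidef :=
    herFun_posSemidef hX fun i => abs_nonneg _
  have hW2 : (herFun hX (fun x => |x|)) ^ 2 = Xᴴ * X := by
    rw [pow_two, herFun_mul]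
    have : (fun x => |x| * |x|) = fun x : ℝ => x * x := by funext x; exact abs_mul_abs_self x
    rw [this, ← herFun_mul, herFun_id, hX.eq]
  have hWsqrt : herFun hX (fun x => |x|) = CFC.sqrt (Xᴴ * X) :=
    (CFC.sqrt_unique ((pow_two _).symm.trans hW2) hW.nonneg).symm
  have hmp : matPow (Xᴴ * X) (1/2) = CFC.sqrt (Xᴴ * X) := by
    unfold matPow matFun
    rw [dif_pos hY.1]
    refine (CFC.sqrt_unique ?_ (Matrix.nonneg_iff_posSemidef.mpr (herFun_posSemidef hY.1 ?_))).symm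
    · rw [herFun_mul]
      refine (herFun_congr hY.1 ?_).trans (herFun_id hY.1)
      intro i
      have hnn := hY.eigenvalues_nonneg i
      by_cases h0 : hY.1.eigenvalues i = 0
      · simp [h0]
      · simp only [if_neg h0]
        have e : Real.rpow (hY.1.eigenvalues i) (1/2) = Real.sqrt (hY.1.eigenvalues i) := by
          rw [Real.sqrt_eq_rpow]; rfl
        rw [e]
        exact Real.mul_self_sqrt hnn
    · intro i
      have hnn := hY.eigenvalues_nonneg i
      by_cases h0 : hY.1.eigenvalues i = 0
      · simp [h0]
      · simp only [if_neg h0]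
        exact Real.rpow_nonneg hnn _
  unfold traceNorm
  rw [hmp, ← hWsqrt, herFun_trace_re]





lemma spectrum_herFun {M : Matrix d d ℂ} (hM : M.IsHermitian) (f : ℝ → ℝ) :
    spectrum ℂ (herFun hM f) = Set.range (fun i => (f (hM.eigenvalues i) : ℂ)) := by
  unfold herFun
  rw [← star_coe_eigenvectorUnitary]
  rw [Matrix.mul_assoc]
  have := Unitary.spectrum_star_right_conjugate (R := ℂ) (U := hM.eigenvectorUnitary)
    (a := Matrix.diagonal (fun i => (f (hM.eigenvalues i) : ℂ)))
  rw [Matrix.mul_assoc] at this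
  rw [this, spectrum_diagonal]

/-- trace of `matPow` of a psd matrix, `r ≠ 0`. -/
lemma matPow_trace_re {τ : Matrix d d ℂ} (hτ : τ.PosSemidef) {r : ℝ} (hr : r ≠ 0) :
    (matPow τ r).trace.re = ∑ i, (hτ.1.eigenvalues i) ^ r := by
  unfold matPow matFun
  rw [dif_pos hτ.1, herFun_trace_re]
  congr 1
  funext i
  by_cases h0 : hτ.1.eigenvalues i = 0
  · simp [h0, Real.zero_rpow hr]
  · rw [if_neg h0]; rfl

lemma eigenvalues_zero (h0 : (0 : Matrix d d ℂ).IsHermitian) (i : d) :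
    h0.eigenvalues i = 0 := by
  have hsum : ∑ j, ((h0.eigenvalues j : ℂ)) = 0 := by
    rw [← herFun_trace h0 (fun x => x), herFun_id, Matrix.trace_zero]
  have hsum' : ∑ j, h0.eigenvalues j = 0 := by
    exact_mod_cast hsum
  have hpsd : (0 : Matrix d d ℂ).PosSemidef := Matrix.PosSemidef.zero
  exact (Finset.sum_eq_zero_iff_of_nonneg (fun j _ => hpsd.eigenvalues_nonneg j)).mp hsum' i
    (Finset.mem_univ i)

lemma traceNorm_zero' : traceNorm (0 : Matrix d d ℂ) = 0 := by
  have h0 : ((0 : Matrix d d ℂ)).IsHermitian := by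
    unfold Matrix.IsHermitian; simp
  have : traceNorm (0 : Matrix d d ℂ) = ∑ i, |h0.eigenvalues i| := by
    have := traceNorm_hermitian h0
    simpa using this
  rw [this]
  simp [eigenvalues_zero h0]

/-- Eigenvalues of a density matrix sum to 1. -/
lemma density_sum_eigenvalues {τ : Matrix d d ℂ} (hτ : IsDensity τ) :
    ∑ i, hτ.1.1.eigenvalues i = 1 := by
  have h : ∑ i, ((hτ.1.1.eigenvalues i : ℂ)) = 1 := by
    rw [← herFun_trace hτ.1.1 (fun x => x), herFun_id]
    exact hτ.2
  exact_mod_cast h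

lemma density_eigenvalue_le_one {τ : Matrix d d ℂ} (hτ : IsDensity τ) (i : d) :
    hτ.1.1.eigenvalues i ≤ 1 := by
  rw [← density_sum_eigenvalues hτ]
  exact Finset.single_le_sum (fun j _ => hτ.1.eigenvalues_nonneg j) (Finset.mem_univ i)

/-- `Tr τ^α ≥ 1` for a density matrix, `0 < α ≤ 1`. -/
lemma one_le_sum_rpow {τ : Matrix d d ℂ} (hτ : IsDensity τ) {α : ℝ} (h0 : 0 < α) (h1 : α ≤ 1) :
    1 ≤ ∑ i, (hτ.1.1.eigenvalues i) ^ α := by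
  rw [← density_sum_eigenvalues hτ]
  apply Finset.sum_le_sum
  intro i _
  set q := hτ.1.1.eigenvalues i with hq
  have hq0 : 0 ≤ q := hτ.1.eigenvalues_nonneg i
  rcases eq_or_lt_of_le hq0 with h | h
  · rw [← h]; rw [Real.zero_rpow (ne_of_gt h0)]
  · calc q = q ^ (1:ℝ) := (Real.rpow_one q).symm
      _ ≤ q ^ α := Real.rpow_le_rpow_of_exponent_ge h (density_eigenvalue_le_one hτ i) h1

/-- Rényi entropies of densities are nonnegative for `α ∈ (0,1)`. -/
lemma renyiEntropy_nonneg {τ : Matrix d d ℂ} (hτ : IsDensity τ) {α : ℝ}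
    (hα : α ∈ Set.Ioo (0:ℝ) 1) : 0 ≤ renyiEntropy α τ := by
  unfold renyiEntropy
  have h1 : (0:ℝ) < 1 - α := by linarith [hα.2]
  apply mul_nonneg
  · positivity
  · apply Real.log_nonneg
    rw [matPow_trace_re hτ.1 (ne_of_gt hα.1)]
    exact one_le_sum_rpow hτ hα.1 (le_of_lt hα.2)





lemma renyiSmooth_set_nonempty (α δ : ℝ) (hδ0 : 0 ≤ δ) (ω : Matrix d d ℂ) (hω : IsDensity ω) :
    {y : ℝ | ∃ τ : Matrix d d ℂ,
      IsDensity τ ∧ (1/2) * traceNorm (ω - τ) ≤ δ ∧ y = renyiEntropy α τ}.Nonempty :=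
  ⟨renyiEntropy α ω, ω, hω, by rw [sub_self, traceNorm_zero']; linarith, rfl⟩

lemma renyiSmooth_set_lb {α : ℝ} (hα : α ∈ Set.Ioo (0:ℝ) 1) (δ : ℝ) (ω : Matrix d d ℂ) :
    ∀ y ∈ {y : ℝ | ∃ τ : Matrix d d ℂ,
      IsDensity τ ∧ (1/2) * traceNorm (ω - τ) ≤ δ ∧ y = renyiEntropy α τ}, 0 ≤ y := by
  rintro y ⟨τ, hτ, _, rfl⟩
  exact renyiEntropy_nonneg hτ hα

lemma tail_le {α δ : ℝ} (hα : α ∈ Set.Ioo (0:ℝ) 1) (hδ0 : 0 < δ)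
    (ω : Matrix d d ℂ) (hω : IsDensity ω) :
    ∑ i, (if δ ^ ((1:ℝ)/(1-α)) * Real.exp (-(renyiSmooth α δ ω)) ≤ hω.1.1.eigenvalues i
      then 0 else hω.1.1.eigenvalues i) ≤ 2*δ := by
  obtain ⟨hα0, hα1⟩ := hα
  have h1α : (0:ℝ) < 1 - α := by linarith
  set hωh : ω.IsHermitian := hω.1.1 with hωh_def
  set p : d → ℝ := hωh.eigenvalues with hp_def
  have hp0 : ∀ i, 0 ≤ p i := fun i => hω.1.eigenvalues_nonneg i
  have hpsum : ∑ i, p i = 1 := density_sum_eigenvalues hω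
  set S := {y : ℝ | ∃ τ : Matrix d d ℂ,
      IsDensity τ ∧ (1/2) * traceNorm (ω - τ) ≤ δ ∧ y = renyiEntropy α τ} with hS_def
  have hSne : S.Nonempty := renyiSmooth_set_nonempty α δ (le_of_lt hδ0) ω hω
  have hSlb := renyiSmooth_set_lb ⟨hα0, hα1⟩ δ ω
  have hbdd : BddBelow S := ⟨0, hSlb⟩
  set H := renyiSmooth α δ ω with hH_def
  have hHS : H = sInf S := rfl
  set lam0 := δ ^ ((1:ℝ)/(1-α)) * Real.exp (-H) with hlam0_def
  have hlam0pos : 0 < lam0 := mul_pos (Real.rpow_pos_of_pos hδ0 _) (Real.exp_pos _)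
  have hloglam0 : Real.log lam0 = (1/(1-α)) * Real.log δ - H := by
    rw [hlam0_def, Real.log_mul (ne_of_gt (Real.rpow_pos_of_pos hδ0 _)) (ne_of_gt (Real.exp_pos _)),
      Real.log_rpow hδ0, Real.log_exp]
    ring
  by_contra hcon
  push_neg at hcon
  -- the tail set of eigenvalues
  set Fs := Finset.univ.filter (fun i => ¬ (lam0 ≤ p i)) with hFs_def
  have htail_eq : ∑ i, (if lam0 ≤ p i then 0 else p i) = ∑ i ∈ Fs, p i := by
    rw [hFs_def, Finset.sum_filter]
    congr 1; funext i; by_cases h : lam0 ≤ p i <;> simp [h]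
  rw [htail_eq] at hcon
  have hFsne : Fs.Nonempty := by
    rcases Finset.eq_empty_or_nonempty Fs with h | h
    · rw [h, Finset.sum_empty] at hcon; linarith
    · exact h
  set lam1 := Fs.sup' hFsne p with hlam1_def
  have hlam1lt : lam1 < lam0 := by
    rw [hlam1_def, Finset.sup'_lt_iff]
    intro i hi
    rw [hFs_def, Finset.mem_filter] at hi
    exact lt_of_not_ge hi.2
  have hlam1pos : 0 < lam1 := by
    by_contra h
    push_neg at h
    have : ∀ i ∈ Fs, p i ≤ 0 := fun i hi => le_trans (Finset.le_sup' p hi) h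
    have : ∑ i ∈ Fs, p i ≤ 0 := Finset.sum_nonpos this
    linarith
  set ε := Real.log (lam0 / lam1) with hε_def
  have hεpos : 0 < ε := Real.log_pos ((one_lt_div hlam1pos).mpr hlam1lt)
  obtain ⟨y, hyS, hylt⟩ := Real.lt_sInf_add_pos hSne hεpos
  obtain ⟨τ, hτden, hτdist, rfl⟩ := hyS
  rw [← hHS] at hylt
  -- eigenvalues of τ
  set hq : τ.IsHermitian := hτden.1.1 with hq_def
  set q : d → ℝ := hq.eigenvalues with hq_def2
  have hq0 : ∀ j, 0 ≤ q j := fun j => hτden.1.eigenvalues_nonneg j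
  have hqsum : ∑ j, q j = 1 := density_sum_eigenvalues hτden
  set T := ∑ j, (q j) ^ α with hT_def
  have hT1 : 1 ≤ T := one_le_sum_rpow hτden hα0 (le_of_lt hα1)
  have hT0 : 0 < T := lt_of_lt_of_le one_pos hT1
  have hHτ : (1/(1-α)) * Real.log T < H + ε := by
    have : renyiEntropy α τ = (1/(1-α)) * Real.log T := by
      unfold renyiEntropy
      rw [matPow_trace_re hτden.1 (ne_of_gt hα0)]
    rw [this] at hylt
    exact hylt
  set lam := Real.exp ((Real.log δ - Real.log T)/(1-α)) with hlam_def
  have hlam0' : 0 < lam := Real.exp_pos _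
  have hlam_ge : lam1 ≤ lam := by
    have hlog1 : Real.log lam1 = Real.log lam0 - ε := by
      rw [hε_def, Real.log_div (ne_of_gt hlam0pos) (ne_of_gt hlam1pos)]; ring
    have hlogT : Real.log T < (1-α) * (H + ε) := by
      have := mul_lt_mul_of_pos_left hHτ h1α
      rw [← mul_assoc] at this
      field_simp at this ⊢
      linarith [this]
    have : Real.log lam1 < (Real.log δ - Real.log T)/(1-α) := by
      rw [hlog1, hloglam0, lt_div_iff₀ h1α]
      have hc : (1/(1-α)) * (1-α) = 1 := by field_simp
      have h3 : (1/(1-α) * Real.log δ - H - ε) * (1-α)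
          = (1/(1-α) * (1-α)) * Real.log δ - (1-α) * (H+ε) := by ring
      rw [h3, hc, one_mul]
      linarith [hlogT]
    calc lam1 = Real.exp (Real.log lam1) := (Real.exp_log hlam1pos).symm
      _ ≤ lam := by rw [hlam_def]; exact Real.exp_le_exp.mpr (le_of_lt this)
  have hlampow : lam ^ ((1:ℝ)-α) = δ / T := by
    rw [hlam_def, ← Real.exp_log (show (0:ℝ) < δ/T from div_pos hδ0 hT0)]
    rw [Real.rpow_def_of_pos (Real.exp_pos _), Real.log_exp]
    congr 1
    rw [Real.log_div (ne_of_gt hδ0) (ne_of_gt hT0)]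
    field_simp
  -- upper bound on sum of mins
  have hscalar : ∀ j, min (q j) lam ≤ (q j) ^ α * lam ^ ((1:ℝ)-α) := by
    intro j
    rcases eq_or_lt_of_le (hq0 j) with h | h
    · rw [← h, Real.zero_rpow (ne_of_gt hα0), zero_mul]
      simp [le_of_lt hlam0']
    · rcases le_or_gt (q j) lam with hc | hc
      · rw [min_eq_left hc]
        calc q j = (q j) ^ α * (q j) ^ (1-α) := by
              rw [← Real.rpow_add h]; norm_num
          _ ≤ (q j) ^ α * lam ^ ((1:ℝ)-α) := by
              apply mul_le_mul_of_nonneg_left _ (Real.rpow_nonneg (hq0 j) _)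
              exact Real.rpow_le_rpow (hq0 j) hc (le_of_lt h1α)
      · rw [min_eq_right (le_of_lt hc)]
        calc lam = lam ^ α * lam ^ (1-α) := by
              rw [← Real.rpow_add hlam0']; norm_num
          _ ≤ (q j) ^ α * lam ^ ((1:ℝ)-α) := by
              apply mul_le_mul_of_nonneg_right _ (Real.rpow_nonneg (le_of_lt hlam0') _)
              exact Real.rpow_le_rpow (le_of_lt hlam0') (le_of_lt hc) (le_of_lt hα0)
  have hmin_le : ∑ j, min (q j) lam ≤ δ := by
    calc ∑ j, min (q j) lam ≤ ∑ j, (q j) ^ α * lam ^ ((1:ℝ)-α) :=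
          Finset.sum_le_sum fun j _ => hscalar j
      _ = T * lam ^ ((1:ℝ)-α) := by rw [← Finset.sum_mul]
      _ = T * (δ/T) := by rw [hlampow]
      _ = δ := by field_simp
  -- lower bound on sum of mins
  have hE : ∑ j, max (q j - lam) 0 ≤ (∑ i, (if lam0 ≤ p i then p i else 0)) + δ := by
    set Sm := herFun hq (fun x => if lam < x then 1 else 0) with hSm_def
    have hSm_psd : Sm.PosSemidef :=
      herFun_posSemidef hq (fun i => by split_ifs <;> norm_num)
    have h1Sm : ((1:Matrix d d ℂ) - Sm).PosSemidef := by
      have h : (1:Matrix d d ℂ) - Sm = herFun hq (fun x => 1 - (if lam < x then 1 else 0)) := by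
        rw [herFun_sub, herFun_one]
      rw [h]
      exact herFun_posSemidef hq (fun i => by split_ifs <;> norm_num)
    have hωlam : herFun hωh (fun x => x - lam) = ω - (lam:ℂ) • 1 := by
      rw [herFun_sub, herFun_id, herFun_const]
    have hτlam : τ - (lam:ℂ) • 1 = herFun hq (fun x => x - lam) := by
      rw [herFun_sub, herFun_id, herFun_const]
    have hE_eq : ∑ j, max (q j - lam) 0 = (Sm * (τ - (lam:ℂ) • 1)).trace.re := by
      rw [hτlam, hSm_def, herFun_mul, herFun_trace_re]
      congr 1; funext j
      rcases le_or_gt (q j) lam with h | h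
      · rw [if_neg (not_lt.mpr h), zero_mul, max_eq_right (by linarith)]
      · rw [if_pos h, one_mul, max_eq_left (by linarith)]
    set X := herFun hωh (fun x => max (x - lam) 0) with hX_def
    have hX_psd : X.PosSemidef := herFun_posSemidef hωh (fun i => le_max_right _ _)
    have hΔ : (ω - τ).IsHermitian := hωh.sub hq
    set Nn := herFun hΔ (fun x => max (-x) 0) with hNn_def
    have hNn_psd : Nn.PosSemidef := herFun_posSemidef hΔ (fun i => le_max_right _ _)
    have key : (X + Nn - (τ - (lam:ℂ) • 1)).PosSemidef := by
      have e1 : X - herFun hωh (fun x => x - lam)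
          = herFun hωh (fun x => max (x - lam) 0 - (x - lam)) := (herFun_sub hωh _ _).symm
      have p1 : (herFun hωh (fun x => max (x - lam) 0 - (x - lam))).PosSemidef :=
        herFun_posSemidef hωh (fun i => sub_nonneg.mpr (le_max_left _ _))
      have e2 : herFun hΔ (fun x => max (-x) 0 + x) = Nn + (ω - τ) := by
        rw [herFun_add hΔ (fun x => max (-x) 0) (fun x => x), herFun_id]
      have p2 : (herFun hΔ (fun x => max (-x) 0 + x)).PosSemidef :=
        herFun_posSemidef hΔ (fun i => by
          have := le_max_left (-(hΔ.eigenvalues i)) 0; linarith)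
      have e3 : X + Nn - (τ - (lam:ℂ) • 1)
          = (X - herFun hωh (fun x => x - lam)) + (Nn + (ω - τ)) := by
        rw [hωlam]; abel
      rw [e3, e1, ← e2]
      exact p1.add p2
    have step1 : (Sm * (τ - (lam:ℂ)•1)).trace.re ≤ (Sm * (X + Nn)).trace.re :=
      trace_mul_re_mono hSm_psd key
    have step2 : (Sm * (X + Nn)).trace.re = (Sm * X).trace.re + (Sm * Nn).trace.re := by
      rw [Matrix.mul_add, Matrix.trace_add, Complex.add_re]
    have hcompress : ∀ Y : Matrix d d ℂ, Y.PosSemidef → (Sm * Y).trace.re ≤ Y.trace.re := by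
      intro Y hY
      have h := trace_mul_re_nonneg h1Sm hY
      rw [Matrix.sub_mul, Matrix.one_mul, Matrix.trace_sub, Complex.sub_re] at h
      linarith
    have hXtr : X.trace.re = ∑ i, max (p i - lam) 0 := herFun_trace_re hωh _
    have hXle : ∑ i, max (p i - lam) 0 ≤ ∑ i, (if lam0 ≤ p i then p i else 0) := by
      apply Finset.sum_le_sum
      intro i _
      by_cases h : lam0 ≤ p i
      · rw [if_pos h]
        exact max_le (sub_le_self _ (le_of_lt hlam0')) (hp0 i)
      · rw [if_neg h]
        have hi : i ∈ Fs := by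
          rw [hFs_def, Finset.mem_filter]
          exact ⟨Finset.mem_univ i, h⟩
        have hple : p i ≤ lam1 := Finset.le_sup' p hi
        rw [max_eq_right (by linarith [hlam_ge])]
    have hNtr : Nn.trace.re = ∑ k, max (-(hΔ.eigenvalues k)) 0 := herFun_trace_re hΔ _
    have hesum : ∑ k, hΔ.eigenvalues k = 0 := by
      have h1 : ∑ k, ((hΔ.eigenvalues k : ℂ)) = (ω - τ).trace := by
        rw [← herFun_trace hΔ (fun x => x), herFun_id]
      rw [Matrix.trace_sub, hω.2, hτden.2, sub_self] at h1
      exact_mod_cast h1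
    have hNle : Nn.trace.re ≤ δ := by
      rw [hNtr]
      have hterm : ∀ k, max (-(hΔ.eigenvalues k)) 0 = (|hΔ.eigenvalues k| - hΔ.eigenvalues k)/2 := by
        intro k
        rcases le_or_gt 0 (hΔ.eigenvalues k) with h | h
        · rw [max_eq_right (by linarith), _root_.abs_of_nonneg h]; ring
        · rw [max_eq_left (by linarith), abs_of_neg h]; ring
      rw [Finset.sum_congr rfl (fun k _ => hterm k), ← Finset.sum_div, Finset.sum_sub_distrib,
        hesum, sub_zero, traceNorm_hermitian hΔ] at *
      linarith [hτdist]
    have := hcompress X hX_psd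
    have := hcompress Nn hNn_psd
    linarith [hE_eq, step1, step2, hXtr.le, hXtr.ge, hXle, hNle]
  have hminE : ∑ j, min (q j) lam = 1 - ∑ j, max (q j - lam) 0 := by
    rw [← hqsum, ← Finset.sum_sub_distrib]
    congr 1; funext j
    rcases le_or_gt (q j) lam with hc | hc
    · rw [min_eq_left hc, max_eq_right (by linarith), sub_zero]
    · rw [min_eq_right (le_of_lt hc), max_eq_left (by linarith)]; ring
  have hkept : ∑ i, (if lam0 ≤ p i then p i else 0) = 1 - ∑ i ∈ Fs, p i := by
    rw [← htail_eq, ← hpsum, ← Finset.sum_sub_distrib]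
    congr 1; funext i; by_cases h : lam0 ≤ p i <;> simp [h]
  rw [hminE] at hmin_le
  rw [hkept] at hE
  linarith




lemma herFun_mul_id_mul {M : Matrix d d ℂ} (hM : M.IsHermitian) (f g : ℝ → ℝ) :
    herFun hM f * M * herFun hM g = herFun hM (fun x => f x * x * g x) := by
  have EQ1 : herFun hM f * M * herFun hM g
      = herFun hM f * herFun hM (fun x => x) * herFun hM g := by
    rw [herFun_id hM]
  rw [EQ1, herFun_mul, herFun_mul]

lemma herFun_comm {M : Matrix d d ℂ} (hM : M.IsHermitian) (f : ℝ → ℝ) :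
    herFun hM f * M = M * herFun hM f := by
  have e1 : herFun hM f * M = herFun hM f * herFun hM (fun x => x) := by rw [herFun_id]
  have e2 : M * herFun hM f = herFun hM (fun x => x) * herFun hM f := by rw [herFun_id]
  rw [e1, e2, herFun_mul, herFun_mul]
  have h : (fun x => f x * x) = (fun x : ℝ => x * f x) := by funext x; ring
  rw [h]

theorem main (α δ : ℝ)
    (hα : α ∈ Set.Ioo (0 : ℝ) 1) (hδ : δ ∈ Set.Ioo (0 : ℝ) (1/2))
    (ω : Matrix d d ℂ) (hω : IsDensity ω) :
    ∃ Λ : Matrix d d ℂ, Λ.PosSemidef ∧ ((1 : Matrix d d ℂ) - Λ).PosSemidef ∧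
      Λ * ω = ω * Λ ∧
      1 - 2 * δ ≤ (Λ * ω * Λ).trace.re ∧
      -Real.log (lambdaMinPos (Λ * ω * Λ))
        ≤ renyiSmooth α δ ω + (1 / (1 - α)) * Real.log (1 / δ) := by
  obtain ⟨hα0, hα1⟩ := hα
  obtain ⟨hδ0, hδh⟩ := hδ
  have h1α : (0:ℝ) < 1 - α := by linarith
  have htail := tail_le ⟨hα0, hα1⟩ hδ0 ω hω
  set hωh : ω.IsHermitian := hω.1.1 with hωh_def
  set p : d → ℝ := hωh.eigenvalues with hp_def
  have hp0 : ∀ i, 0 ≤ p i := fun i => hω.1.eigenvalues_nonneg i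
  have hpsum : ∑ i, p i = 1 := density_sum_eigenvalues hω
  set H := renyiSmooth α δ ω with hH_def
  set lam0 := δ ^ ((1:ℝ)/(1-α)) * Real.exp (-H) with hlam0_def
  have hlam0pos : 0 < lam0 := mul_pos (Real.rpow_pos_of_pos hδ0 _) (Real.exp_pos _)
  have hloglam0 : Real.log lam0 = (1/(1-α)) * Real.log δ - H := by
    rw [hlam0_def, Real.log_mul (ne_of_gt (Real.rpow_pos_of_pos hδ0 _)) (ne_of_gt (Real.exp_pos _)),
      Real.log_rpow hδ0, Real.log_exp]
    ring
  have hkept : 1 - 2*δ ≤ ∑ i, (if lam0 ≤ p i then p i else 0) := by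
    have hsplit : (∑ i, (if lam0 ≤ p i then p i else 0)) + (∑ i, (if lam0 ≤ p i then 0 else p i))
        = 1 := by
      rw [← Finset.sum_add_distrib, ← hpsum]
      congr 1; funext i; by_cases h : lam0 ≤ p i <;> simp [h]
    linarith [htail]
  set Λf := herFun hωh (fun x => if lam0 ≤ x then 1 else 0) with hΛ_def
  set g : ℝ → ℝ := fun x => if lam0 ≤ x then x else 0 with hg_def
  have hM : Λf * ω * Λf = herFun hωh g := by
    rw [hΛ_def, herFun_mul_id_mul]
    have hfg : (fun x : ℝ => (if lam0 ≤ x then 1 else 0) * x * (if lam0 ≤ x then 1 else 0)) = g := by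
      funext x; by_cases h : lam0 ≤ x <;> simp [h, hg_def]
    exact congrArg _ hfg
  have htr : (Λf * ω * Λf).trace.re = ∑ i, (if lam0 ≤ p i then p i else 0) := by
    rw [hM, herFun_trace_re]
  refine ⟨Λf, ?_, ?_, ?_, ?_, ?_⟩
  · exact herFun_posSemidef hωh (fun i => by split_ifs <;> norm_num)
  · have h : (1:Matrix d d ℂ) - Λf
        = herFun hωh (fun x => 1 - (if lam0 ≤ x then 1 else 0)) := by
      rw [herFun_sub, herFun_one, hΛ_def]
    rw [h]
    exact herFun_posSemidef hωh (fun i => by split_ifs <;> norm_num)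
  · exact herFun_comm hωh _
  · rw [htr]; exact hkept
  · -- spectrum bound
    have hspec : spectrum ℂ (Λf * ω * Λf) = Set.range (fun i => (g (p i) : ℂ)) := by
      rw [hM, spectrum_herFun]
    have hSp_iff : ∀ x : ℝ, (x ≠ 0 ∧ (x:ℂ) ∈ spectrum ℂ (Λf * ω * Λf)) ↔
        (x ≠ 0 ∧ ∃ i, g (p i) = x) := by
      intro x
      rw [hspec]
      constructor
      · rintro ⟨hx0, ⟨i, hi⟩⟩
        have hi' : ((g (p i) : ℝ) : ℂ) = (x : ℂ) := hi
        exact ⟨hx0, ⟨i, by exact_mod_cast hi'⟩⟩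
      · rintro ⟨hx0, ⟨i, hi⟩⟩
        refine ⟨hx0, ⟨i, ?_⟩⟩
        show ((g (p i) : ℝ) : ℂ) = (x : ℂ)
        exact_mod_cast hi
    have hexists : ∃ i, 0 < g (p i) := by
      by_contra hno
      push_neg at hno
      have hsn : ∑ i, g (p i) ≤ 0 := Finset.sum_nonpos (fun i _ => hno i)
      have : ∑ i, (if lam0 ≤ p i then p i else 0) = ∑ i, g (p i) := rfl
      rw [this] at hkept
      linarith
    obtain ⟨i0, hi0⟩ := hexists
    have hne : {x : ℝ | x ≠ 0 ∧ (x:ℂ) ∈ spectrum ℂ (Λf * ω * Λf)}.Nonempty :=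
      ⟨g (p i0), (hSp_iff _).mpr ⟨ne_of_gt hi0, ⟨i0, rfl⟩⟩⟩
    have hlb : ∀ x ∈ {x : ℝ | x ≠ 0 ∧ (x:ℂ) ∈ spectrum ℂ (Λf * ω * Λf)}, lam0 ≤ x := by
      intro x hx
      obtain ⟨hx0, i, hix⟩ := (hSp_iff x).mp hx
      by_cases h : lam0 ≤ p i
      · rw [← hix, hg_def]; simpa [h] using h
      · exfalso
        apply hx0
        rw [← hix, hg_def]
        simp [h]
    have hInf : lam0 ≤ sInf {x : ℝ | x ≠ 0 ∧ (x:ℂ) ∈ spectrum ℂ (Λf * ω * Λf)} :=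
      le_csInf hne hlb
    have hlog : Real.log lam0
        ≤ Real.log (sInf {x : ℝ | x ≠ 0 ∧ (x:ℂ) ∈ spectrum ℂ (Λf * ω * Λf)}) :=
      Real.log_le_log hlam0pos hInf
    have hlogdelta : Real.log (1/δ) = -Real.log δ := by rw [one_div, Real.log_inv]
    unfold lambdaMinPos
    have h1 : (1/(1-α)) * Real.log (1/δ) = -((1/(1-α)) * Real.log δ) := by
      rw [hlogdelta]; ring
    linarith [hlog, hloglam0]

end EffectAux

/-- **Existence of a good effect `Λ`**: there is `0 ≤ Λ ≤ I` commuting with `ω` such that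
`Tr[ΛωΛ] ≥ 1 − 2δ` and `−log λ_min(ΛωΛ) ≤ H_α^δ(ω) + (1/(1−α))·log(1/δ)`. -/
theorem exists_effect_lambdaMin_bound (α δ : ℝ)
    (hα : α ∈ Set.Ioo (0 : ℝ) 1) (hδ : δ ∈ Set.Ioo (0 : ℝ) (1/2))
    (ω : Matrix d d ℂ) (hω : IsDensity ω) :
    ∃ Λ : Matrix d d ℂ, Λ.PosSemidef ∧ ((1 : Matrix d d ℂ) - Λ).PosSemidef ∧
      Λ * ω = ω * Λ ∧
      1 - 2 * δ ≤ (Λ * ω * Λ).trace.re ∧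
      -Real.log (lambdaMinPos (Λ * ω * Λ))
        ≤ renyiSmooth α δ ω + (1 / (1 - α)) * Real.log (1 / δ) :=
  EffectAux.main α δ hα hδ ω hω
end
end
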